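/- The lattice O_40 has a basis consisting of 4-vectors: there exists a matrix P ∈ GL(40, ℤ) such that every diagonal entry of P·G·Pᵀ equals 4. -/

import Mathlib

open Matrix

noncomputable section

/-- The 20×20 integer matrix `B1` (entries given as rationals). -/
def B1 : Matrix (Fin 20) (Fin 20) ℚ :=
  !![0,2,1,1,2,2,2,2,1,2,4,20,16,10,4,10,2,8,16,7;
    1,0,2,1,1,2,2,2,2,1,17,10,11,19,4,7,10,11,20,13;
    2,1,0,2,1,1,2,2,2,2,19,20,16,2,16,16,7,4,17,16;
    2,2,1,0,2,1,1,2,2,2,17,4,11,19,17,19,16,16,16,1;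
    1,2,2,1,0,2,1,1,2,2,17,2,16,14,13,20,19,4,7,7;
    1,1,2,2,1,0,2,1,1,2,8,11,11,13,20,10,20,10,13,1;
    1,1,1,2,2,1,0,2,1,1,14,17,8,5,4,14,10,2,7,10;
    1,1,1,1,2,2,1,0,2,1,7,8,5,5,11,1,14,1,11,4;
    2,1,1,1,1,2,2,1,0,2,10,19,11,11,14,17,1,11,4,16;
    1,2,1,1,1,1,2,2,1,0,5,7,13,20,14,2,17,7,5,13;
    2,1,2,1,1,1,1,2,2,1,3,2,1,1,2,2,2,2,1,10;
    1,2,1,2,1,1,1,1,2,2,1,3,2,1,1,2,2,2,2,10;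
    2,1,2,1,2,1,1,1,1,2,2,1,3,2,1,1,2,2,2,10;
    2,2,1,2,1,2,1,1,1,1,2,2,1,3,2,1,1,2,2,10;
    2,2,2,1,2,1,2,1,1,1,1,2,2,1,3,2,1,1,2,10;
    2,2,2,2,1,2,1,2,1,1,1,1,2,2,1,3,2,1,1,10;
    1,2,2,2,2,1,2,1,2,1,1,1,1,2,2,1,3,2,1,10;
    1,1,2,2,2,2,1,2,1,2,1,1,1,1,2,2,1,3,2,10;
    2,1,1,2,2,2,2,1,2,1,2,1,1,1,1,2,2,1,3,10;
    1,1,1,1,1,1,1,1,1,1,1,1,1,1,1,1,1,1,1,11]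

/-- The 10×10 integer matrix `B3` (entries given as rationals). -/
def B3 : Matrix (Fin 10) (Fin 10) ℚ :=
  !![18,3,6,12,18,12,0,15,6,3;
    6,12,12,3,18,15,12,12,3,18;
    3,3,6,0,6,6,15,18,6,15;
    6,18,12,3,6,3,6,6,6,9;
    6,0,6,9,9,3,3,18,15,3;
    15,12,12,9,3,12,3,12,9,9;
    9,6,15,18,18,9,12,0,15,0;
    15,15,18,18,12,0,9,0,12,6;
    12,3,12,12,9,6,0,12,18,15;
    18,15,9,3,9,0,6,15,18,18]

/-- `B2 = [[3·I₁₀, B3],[0, 21·I₁₀]]`. -/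
def B2 : Matrix (Fin 20) (Fin 20) ℚ :=
  Matrix.reindex finSumFinEquiv finSumFinEquiv
    (Matrix.fromBlocks ((3 : ℚ) • (1 : Matrix (Fin 10) (Fin 10) ℚ)) B3
      0 ((21 : ℚ) • (1 : Matrix (Fin 10) (Fin 10) ℚ)))

/-- `B = [[I₂₀, B1],[0, B2]]`. -/
def Bmat : Matrix (Fin 40) (Fin 40) ℚ :=
  Matrix.reindex finSumFinEquiv finSumFinEquiv
    (Matrix.fromBlocks (1 : Matrix (Fin 20) (Fin 20) ℚ) B1 0 B2)

/-- `G_e = (1/21)·[[28·I₂₀, 7·I₂₀],[7·I₂₀, 2·I₂₀]]`,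
the Gram matrix of the chosen basis of the dual lattice `L^∨`. -/
def Ge : Matrix (Fin 40) (Fin 40) ℚ :=
  (1 / 21 : ℚ) •
    Matrix.reindex finSumFinEquiv finSumFinEquiv
      (Matrix.fromBlocks ((28 : ℚ) • (1 : Matrix (Fin 20) (Fin 20) ℚ))
        ((7 : ℚ) • (1 : Matrix (Fin 20) (Fin 20) ℚ))
        ((7 : ℚ) • (1 : Matrix (Fin 20) (Fin 20) ℚ))
        ((2 : ℚ) • (1 : Matrix (Fin 20) (Fin 20) ℚ)))

/-- The Gram matrix `G = B · G_e · Bᵀ` of the lattice `O₄₀`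
(its entries are in fact integers). -/
def GO40 : Matrix (Fin 40) (Fin 40) ℚ :=
  Bmat * Ge * Bmatᵀ

/-- The bilinear form of `O₄₀` on integer row vectors: `(x, y) ↦ x · G · yᵀ`. -/
def ip (x y : Fin 40 → ℤ) : ℚ :=
  (fun i => (x i : ℚ)) ⬝ᵥ GO40.mulVec (fun j => (y j : ℚ))


set_option maxHeartbeats 10000000
set_option maxRecDepth 100000

def blr0 : List Int := [1,0,0,0,0,0,0,0,0,0,0,0,0,0,0,0,0,0,0,0,0,2,1,1,2,2,2,2,1,2,4,20,16,10,4,10,2,8,16,7]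
def blr1 : List Int := [0,1,0,0,0,0,0,0,0,0,0,0,0,0,0,0,0,0,0,0,1,0,2,1,1,2,2,2,2,1,17,10,11,19,4,7,10,11,20,13]
def blr2 : List Int := [0,0,1,0,0,0,0,0,0,0,0,0,0,0,0,0,0,0,0,0,2,1,0,2,1,1,2,2,2,2,19,20,16,2,16,16,7,4,17,16]
def blr3 : List Int := [0,0,0,1,0,0,0,0,0,0,0,0,0,0,0,0,0,0,0,0,2,2,1,0,2,1,1,2,2,2,17,4,11,19,17,19,16,16,16,1]
def blr4 : List Int := [0,0,0,0,1,0,0,0,0,0,0,0,0,0,0,0,0,0,0,0,1,2,2,1,0,2,1,1,2,2,17,2,16,14,13,20,19,4,7,7]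
def blr5 : List Int := [0,0,0,0,0,1,0,0,0,0,0,0,0,0,0,0,0,0,0,0,1,1,2,2,1,0,2,1,1,2,8,11,11,13,20,10,20,10,13,1]
def blr6 : List Int := [0,0,0,0,0,0,1,0,0,0,0,0,0,0,0,0,0,0,0,0,1,1,1,2,2,1,0,2,1,1,14,17,8,5,4,14,10,2,7,10]
def blr7 : List Int := [0,0,0,0,0,0,0,1,0,0,0,0,0,0,0,0,0,0,0,0,1,1,1,1,2,2,1,0,2,1,7,8,5,5,11,1,14,1,11,4]
def blr8 : List Int := [0,0,0,0,0,0,0,0,1,0,0,0,0,0,0,0,0,0,0,0,2,1,1,1,1,2,2,1,0,2,10,19,11,11,14,17,1,11,4,16]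
def blr9 : List Int := [0,0,0,0,0,0,0,0,0,1,0,0,0,0,0,0,0,0,0,0,1,2,1,1,1,1,2,2,1,0,5,7,13,20,14,2,17,7,5,13]
def blr10 : List Int := [0,0,0,0,0,0,0,0,0,0,1,0,0,0,0,0,0,0,0,0,2,1,2,1,1,1,1,2,2,1,3,2,1,1,2,2,2,2,1,10]
def blr11 : List Int := [0,0,0,0,0,0,0,0,0,0,0,1,0,0,0,0,0,0,0,0,1,2,1,2,1,1,1,1,2,2,1,3,2,1,1,2,2,2,2,10]
def blr12 : List Int := [0,0,0,0,0,0,0,0,0,0,0,0,1,0,0,0,0,0,0,0,2,1,2,1,2,1,1,1,1,2,2,1,3,2,1,1,2,2,2,10]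
def blr13 : List Int := [0,0,0,0,0,0,0,0,0,0,0,0,0,1,0,0,0,0,0,0,2,2,1,2,1,2,1,1,1,1,2,2,1,3,2,1,1,2,2,10]
def blr14 : List Int := [0,0,0,0,0,0,0,0,0,0,0,0,0,0,1,0,0,0,0,0,2,2,2,1,2,1,2,1,1,1,1,2,2,1,3,2,1,1,2,10]
def blr15 : List Int := [0,0,0,0,0,0,0,0,0,0,0,0,0,0,0,1,0,0,0,0,2,2,2,2,1,2,1,2,1,1,1,1,2,2,1,3,2,1,1,10]
def blr16 : List Int := [0,0,0,0,0,0,0,0,0,0,0,0,0,0,0,0,1,0,0,0,1,2,2,2,2,1,2,1,2,1,1,1,1,2,2,1,3,2,1,10]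
def blr17 : List Int := [0,0,0,0,0,0,0,0,0,0,0,0,0,0,0,0,0,1,0,0,1,1,2,2,2,2,1,2,1,2,1,1,1,1,2,2,1,3,2,10]
def blr18 : List Int := [0,0,0,0,0,0,0,0,0,0,0,0,0,0,0,0,0,0,1,0,2,1,1,2,2,2,2,1,2,1,2,1,1,1,1,2,2,1,3,10]
def blr19 : List Int := [0,0,0,0,0,0,0,0,0,0,0,0,0,0,0,0,0,0,0,1,1,1,1,1,1,1,1,1,1,1,1,1,1,1,1,1,1,1,1,11]
def blr20 : List Int := [0,0,0,0,0,0,0,0,0,0,0,0,0,0,0,0,0,0,0,0,3,0,0,0,0,0,0,0,0,0,18,3,6,12,18,12,0,15,6,3]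
def blr21 : List Int := [0,0,0,0,0,0,0,0,0,0,0,0,0,0,0,0,0,0,0,0,0,3,0,0,0,0,0,0,0,0,6,12,12,3,18,15,12,12,3,18]
def blr22 : List Int := [0,0,0,0,0,0,0,0,0,0,0,0,0,0,0,0,0,0,0,0,0,0,3,0,0,0,0,0,0,0,3,3,6,0,6,6,15,18,6,15]
def blr23 : List Int := [0,0,0,0,0,0,0,0,0,0,0,0,0,0,0,0,0,0,0,0,0,0,0,3,0,0,0,0,0,0,6,18,12,3,6,3,6,6,6,9]
def blr24 : List Int := [0,0,0,0,0,0,0,0,0,0,0,0,0,0,0,0,0,0,0,0,0,0,0,0,3,0,0,0,0,0,6,0,6,9,9,3,3,18,15,3]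
def blr25 : List Int := [0,0,0,0,0,0,0,0,0,0,0,0,0,0,0,0,0,0,0,0,0,0,0,0,0,3,0,0,0,0,15,12,12,9,3,12,3,12,9,9]
def blr26 : List Int := [0,0,0,0,0,0,0,0,0,0,0,0,0,0,0,0,0,0,0,0,0,0,0,0,0,0,3,0,0,0,9,6,15,18,18,9,12,0,15,0]
def blr27 : List Int := [0,0,0,0,0,0,0,0,0,0,0,0,0,0,0,0,0,0,0,0,0,0,0,0,0,0,0,3,0,0,15,15,18,18,12,0,9,0,12,6]
def blr28 : List Int := [0,0,0,0,0,0,0,0,0,0,0,0,0,0,0,0,0,0,0,0,0,0,0,0,0,0,0,0,3,0,12,3,12,12,9,6,0,12,18,15]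
def blr29 : List Int := [0,0,0,0,0,0,0,0,0,0,0,0,0,0,0,0,0,0,0,0,0,0,0,0,0,0,0,0,0,3,18,15,9,3,9,0,6,15,18,18]
def blr30 : List Int := [0,0,0,0,0,0,0,0,0,0,0,0,0,0,0,0,0,0,0,0,0,0,0,0,0,0,0,0,0,0,21,0,0,0,0,0,0,0,0,0]
def blr31 : List Int := [0,0,0,0,0,0,0,0,0,0,0,0,0,0,0,0,0,0,0,0,0,0,0,0,0,0,0,0,0,0,0,21,0,0,0,0,0,0,0,0]
def blr32 : List Int := [0,0,0,0,0,0,0,0,0,0,0,0,0,0,0,0,0,0,0,0,0,0,0,0,0,0,0,0,0,0,0,0,21,0,0,0,0,0,0,0]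
def blr33 : List Int := [0,0,0,0,0,0,0,0,0,0,0,0,0,0,0,0,0,0,0,0,0,0,0,0,0,0,0,0,0,0,0,0,0,21,0,0,0,0,0,0]
def blr34 : List Int := [0,0,0,0,0,0,0,0,0,0,0,0,0,0,0,0,0,0,0,0,0,0,0,0,0,0,0,0,0,0,0,0,0,0,21,0,0,0,0,0]
def blr35 : List Int := [0,0,0,0,0,0,0,0,0,0,0,0,0,0,0,0,0,0,0,0,0,0,0,0,0,0,0,0,0,0,0,0,0,0,0,21,0,0,0,0]
def blr36 : List Int := [0,0,0,0,0,0,0,0,0,0,0,0,0,0,0,0,0,0,0,0,0,0,0,0,0,0,0,0,0,0,0,0,0,0,0,0,21,0,0,0]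
def blr37 : List Int := [0,0,0,0,0,0,0,0,0,0,0,0,0,0,0,0,0,0,0,0,0,0,0,0,0,0,0,0,0,0,0,0,0,0,0,0,0,21,0,0]
def blr38 : List Int := [0,0,0,0,0,0,0,0,0,0,0,0,0,0,0,0,0,0,0,0,0,0,0,0,0,0,0,0,0,0,0,0,0,0,0,0,0,0,21,0]
def blr39 : List Int := [0,0,0,0,0,0,0,0,0,0,0,0,0,0,0,0,0,0,0,0,0,0,0,0,0,0,0,0,0,0,0,0,0,0,0,0,0,0,0,21]
def bl : List (List Int) := [blr0,blr1,blr2,blr3,blr4,blr5,blr6,blr7,blr8,blr9,blr10,blr11,blr12,blr13,blr14,blr15,blr16,blr17,blr18,blr19,blr20,blr21,blr22,blr23,blr24,blr25,blr26,blr27,blr28,blr29,blr30,blr31,blr32,blr33,blr34,blr35,blr36,blr37,blr38,blr39]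
def gelr0 : List Int := [28,0,0,0,0,0,0,0,0,0,0,0,0,0,0,0,0,0,0,0,7,0,0,0,0,0,0,0,0,0,0,0,0,0,0,0,0,0,0,0]
def gelr1 : List Int := [0,28,0,0,0,0,0,0,0,0,0,0,0,0,0,0,0,0,0,0,0,7,0,0,0,0,0,0,0,0,0,0,0,0,0,0,0,0,0,0]
def gelr2 : List Int := [0,0,28,0,0,0,0,0,0,0,0,0,0,0,0,0,0,0,0,0,0,0,7,0,0,0,0,0,0,0,0,0,0,0,0,0,0,0,0,0]
def gelr3 : List Int := [0,0,0,28,0,0,0,0,0,0,0,0,0,0,0,0,0,0,0,0,0,0,0,7,0,0,0,0,0,0,0,0,0,0,0,0,0,0,0,0]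
def gelr4 : List Int := [0,0,0,0,28,0,0,0,0,0,0,0,0,0,0,0,0,0,0,0,0,0,0,0,7,0,0,0,0,0,0,0,0,0,0,0,0,0,0,0]
def gelr5 : List Int := [0,0,0,0,0,28,0,0,0,0,0,0,0,0,0,0,0,0,0,0,0,0,0,0,0,7,0,0,0,0,0,0,0,0,0,0,0,0,0,0]
def gelr6 : List Int := [0,0,0,0,0,0,28,0,0,0,0,0,0,0,0,0,0,0,0,0,0,0,0,0,0,0,7,0,0,0,0,0,0,0,0,0,0,0,0,0]
def gelr7 : List Int := [0,0,0,0,0,0,0,28,0,0,0,0,0,0,0,0,0,0,0,0,0,0,0,0,0,0,0,7,0,0,0,0,0,0,0,0,0,0,0,0]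
def gelr8 : List Int := [0,0,0,0,0,0,0,0,28,0,0,0,0,0,0,0,0,0,0,0,0,0,0,0,0,0,0,0,7,0,0,0,0,0,0,0,0,0,0,0]
def gelr9 : List Int := [0,0,0,0,0,0,0,0,0,28,0,0,0,0,0,0,0,0,0,0,0,0,0,0,0,0,0,0,0,7,0,0,0,0,0,0,0,0,0,0]
def gelr10 : List Int := [0,0,0,0,0,0,0,0,0,0,28,0,0,0,0,0,0,0,0,0,0,0,0,0,0,0,0,0,0,0,7,0,0,0,0,0,0,0,0,0]
def gelr11 : List Int := [0,0,0,0,0,0,0,0,0,0,0,28,0,0,0,0,0,0,0,0,0,0,0,0,0,0,0,0,0,0,0,7,0,0,0,0,0,0,0,0]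
def gelr12 : List Int := [0,0,0,0,0,0,0,0,0,0,0,0,28,0,0,0,0,0,0,0,0,0,0,0,0,0,0,0,0,0,0,0,7,0,0,0,0,0,0,0]
def gelr13 : List Int := [0,0,0,0,0,0,0,0,0,0,0,0,0,28,0,0,0,0,0,0,0,0,0,0,0,0,0,0,0,0,0,0,0,7,0,0,0,0,0,0]
def gelr14 : List Int := [0,0,0,0,0,0,0,0,0,0,0,0,0,0,28,0,0,0,0,0,0,0,0,0,0,0,0,0,0,0,0,0,0,0,7,0,0,0,0,0]
def gelr15 : List Int := [0,0,0,0,0,0,0,0,0,0,0,0,0,0,0,28,0,0,0,0,0,0,0,0,0,0,0,0,0,0,0,0,0,0,0,7,0,0,0,0]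
def gelr16 : List Int := [0,0,0,0,0,0,0,0,0,0,0,0,0,0,0,0,28,0,0,0,0,0,0,0,0,0,0,0,0,0,0,0,0,0,0,0,7,0,0,0]
def gelr17 : List Int := [0,0,0,0,0,0,0,0,0,0,0,0,0,0,0,0,0,28,0,0,0,0,0,0,0,0,0,0,0,0,0,0,0,0,0,0,0,7,0,0]
def gelr18 : List Int := [0,0,0,0,0,0,0,0,0,0,0,0,0,0,0,0,0,0,28,0,0,0,0,0,0,0,0,0,0,0,0,0,0,0,0,0,0,0,7,0]
def gelr19 : List Int := [0,0,0,0,0,0,0,0,0,0,0,0,0,0,0,0,0,0,0,28,0,0,0,0,0,0,0,0,0,0,0,0,0,0,0,0,0,0,0,7]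
def gelr20 : List Int := [7,0,0,0,0,0,0,0,0,0,0,0,0,0,0,0,0,0,0,0,2,0,0,0,0,0,0,0,0,0,0,0,0,0,0,0,0,0,0,0]
def gelr21 : List Int := [0,7,0,0,0,0,0,0,0,0,0,0,0,0,0,0,0,0,0,0,0,2,0,0,0,0,0,0,0,0,0,0,0,0,0,0,0,0,0,0]
def gelr22 : List Int := [0,0,7,0,0,0,0,0,0,0,0,0,0,0,0,0,0,0,0,0,0,0,2,0,0,0,0,0,0,0,0,0,0,0,0,0,0,0,0,0]
def gelr23 : List Int := [0,0,0,7,0,0,0,0,0,0,0,0,0,0,0,0,0,0,0,0,0,0,0,2,0,0,0,0,0,0,0,0,0,0,0,0,0,0,0,0]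
def gelr24 : List Int := [0,0,0,0,7,0,0,0,0,0,0,0,0,0,0,0,0,0,0,0,0,0,0,0,2,0,0,0,0,0,0,0,0,0,0,0,0,0,0,0]
def gelr25 : List Int := [0,0,0,0,0,7,0,0,0,0,0,0,0,0,0,0,0,0,0,0,0,0,0,0,0,2,0,0,0,0,0,0,0,0,0,0,0,0,0,0]
def gelr26 : List Int := [0,0,0,0,0,0,7,0,0,0,0,0,0,0,0,0,0,0,0,0,0,0,0,0,0,0,2,0,0,0,0,0,0,0,0,0,0,0,0,0]
def gelr27 : List Int := [0,0,0,0,0,0,0,7,0,0,0,0,0,0,0,0,0,0,0,0,0,0,0,0,0,0,0,2,0,0,0,0,0,0,0,0,0,0,0,0]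
def gelr28 : List Int := [0,0,0,0,0,0,0,0,7,0,0,0,0,0,0,0,0,0,0,0,0,0,0,0,0,0,0,0,2,0,0,0,0,0,0,0,0,0,0,0]
def gelr29 : List Int := [0,0,0,0,0,0,0,0,0,7,0,0,0,0,0,0,0,0,0,0,0,0,0,0,0,0,0,0,0,2,0,0,0,0,0,0,0,0,0,0]
def gelr30 : List Int := [0,0,0,0,0,0,0,0,0,0,7,0,0,0,0,0,0,0,0,0,0,0,0,0,0,0,0,0,0,0,2,0,0,0,0,0,0,0,0,0]
def gelr31 : List Int := [0,0,0,0,0,0,0,0,0,0,0,7,0,0,0,0,0,0,0,0,0,0,0,0,0,0,0,0,0,0,0,2,0,0,0,0,0,0,0,0]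
def gelr32 : List Int := [0,0,0,0,0,0,0,0,0,0,0,0,7,0,0,0,0,0,0,0,0,0,0,0,0,0,0,0,0,0,0,0,2,0,0,0,0,0,0,0]
def gelr33 : List Int := [0,0,0,0,0,0,0,0,0,0,0,0,0,7,0,0,0,0,0,0,0,0,0,0,0,0,0,0,0,0,0,0,0,2,0,0,0,0,0,0]
def gelr34 : List Int := [0,0,0,0,0,0,0,0,0,0,0,0,0,0,7,0,0,0,0,0,0,0,0,0,0,0,0,0,0,0,0,0,0,0,2,0,0,0,0,0]
def gelr35 : List Int := [0,0,0,0,0,0,0,0,0,0,0,0,0,0,0,7,0,0,0,0,0,0,0,0,0,0,0,0,0,0,0,0,0,0,0,2,0,0,0,0]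
def gelr36 : List Int := [0,0,0,0,0,0,0,0,0,0,0,0,0,0,0,0,7,0,0,0,0,0,0,0,0,0,0,0,0,0,0,0,0,0,0,0,2,0,0,0]
def gelr37 : List Int := [0,0,0,0,0,0,0,0,0,0,0,0,0,0,0,0,0,7,0,0,0,0,0,0,0,0,0,0,0,0,0,0,0,0,0,0,0,2,0,0]
def gelr38 : List Int := [0,0,0,0,0,0,0,0,0,0,0,0,0,0,0,0,0,0,7,0,0,0,0,0,0,0,0,0,0,0,0,0,0,0,0,0,0,0,2,0]
def gelr39 : List Int := [0,0,0,0,0,0,0,0,0,0,0,0,0,0,0,0,0,0,0,7,0,0,0,0,0,0,0,0,0,0,0,0,0,0,0,0,0,0,0,2]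
def gel : List (List Int) := [gelr0,gelr1,gelr2,gelr3,gelr4,gelr5,gelr6,gelr7,gelr8,gelr9,gelr10,gelr11,gelr12,gelr13,gelr14,gelr15,gelr16,gelr17,gelr18,gelr19,gelr20,gelr21,gelr22,gelr23,gelr24,gelr25,gelr26,gelr27,gelr28,gelr29,gelr30,gelr31,gelr32,gelr33,gelr34,gelr35,gelr36,gelr37,gelr38,gelr39]
def x1lr0 : List Int := [28,14,7,7,14,14,14,14,7,14,28,140,112,70,28,70,14,56,112,49,7,4,2,2,4,4,4,4,2,4,8,40,32,20,8,20,4,16,32,14]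
def x1lr1 : List Int := [7,28,14,7,7,14,14,14,14,7,119,70,77,133,28,49,70,77,140,91,2,7,4,2,2,4,4,4,4,2,34,20,22,38,8,14,20,22,40,26]
def x1lr2 : List Int := [14,7,28,14,7,7,14,14,14,14,133,140,112,14,112,112,49,28,119,112,4,2,7,4,2,2,4,4,4,4,38,40,32,4,32,32,14,8,34,32]
def x1lr3 : List Int := [14,14,7,28,14,7,7,14,14,14,119,28,77,133,119,133,112,112,112,7,4,4,2,7,4,2,2,4,4,4,34,8,22,38,34,38,32,32,32,2]
def x1lr4 : List Int := [7,14,14,7,28,14,7,7,14,14,119,14,112,98,91,140,133,28,49,49,2,4,4,2,7,4,2,2,4,4,34,4,32,28,26,40,38,8,14,14]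
def x1lr5 : List Int := [7,7,14,14,7,28,14,7,7,14,56,77,77,91,140,70,140,70,91,7,2,2,4,4,2,7,4,2,2,4,16,22,22,26,40,20,40,20,26,2]
def x1lr6 : List Int := [7,7,7,14,14,7,28,14,7,7,98,119,56,35,28,98,70,14,49,70,2,2,2,4,4,2,7,4,2,2,28,34,16,10,8,28,20,4,14,20]
def x1lr7 : List Int := [7,7,7,7,14,14,7,28,14,7,49,56,35,35,77,7,98,7,77,28,2,2,2,2,4,4,2,7,4,2,14,16,10,10,22,2,28,2,22,8]
def x1lr8 : List Int := [14,7,7,7,7,14,14,7,28,14,70,133,77,77,98,119,7,77,28,112,4,2,2,2,2,4,4,2,7,4,20,38,22,22,28,34,2,22,8,32]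
def x1lr9 : List Int := [7,14,7,7,7,7,14,14,7,28,35,49,91,140,98,14,119,49,35,91,2,4,2,2,2,2,4,4,2,7,10,14,26,40,28,4,34,14,10,26]
def x1lr10 : List Int := [14,7,14,7,7,7,7,14,14,7,49,14,7,7,14,14,14,14,7,70,4,2,4,2,2,2,2,4,4,2,13,4,2,2,4,4,4,4,2,20]
def x1lr11 : List Int := [7,14,7,14,7,7,7,7,14,14,7,49,14,7,7,14,14,14,14,70,2,4,2,4,2,2,2,2,4,4,2,13,4,2,2,4,4,4,4,20]
def x1lr12 : List Int := [14,7,14,7,14,7,7,7,7,14,14,7,49,14,7,7,14,14,14,70,4,2,4,2,4,2,2,2,2,4,4,2,13,4,2,2,4,4,4,20]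
def x1lr13 : List Int := [14,14,7,14,7,14,7,7,7,7,14,14,7,49,14,7,7,14,14,70,4,4,2,4,2,4,2,2,2,2,4,4,2,13,4,2,2,4,4,20]
def x1lr14 : List Int := [14,14,14,7,14,7,14,7,7,7,7,14,14,7,49,14,7,7,14,70,4,4,4,2,4,2,4,2,2,2,2,4,4,2,13,4,2,2,4,20]
def x1lr15 : List Int := [14,14,14,14,7,14,7,14,7,7,7,7,14,14,7,49,14,7,7,70,4,4,4,4,2,4,2,4,2,2,2,2,4,4,2,13,4,2,2,20]
def x1lr16 : List Int := [7,14,14,14,14,7,14,7,14,7,7,7,7,14,14,7,49,14,7,70,2,4,4,4,4,2,4,2,4,2,2,2,2,4,4,2,13,4,2,20]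
def x1lr17 : List Int := [7,7,14,14,14,14,7,14,7,14,7,7,7,7,14,14,7,49,14,70,2,2,4,4,4,4,2,4,2,4,2,2,2,2,4,4,2,13,4,20]
def x1lr18 : List Int := [14,7,7,14,14,14,14,7,14,7,14,7,7,7,7,14,14,7,49,70,4,2,2,4,4,4,4,2,4,2,4,2,2,2,2,4,4,2,13,20]
def x1lr19 : List Int := [7,7,7,7,7,7,7,7,7,7,7,7,7,7,7,7,7,7,7,105,2,2,2,2,2,2,2,2,2,2,2,2,2,2,2,2,2,2,2,29]
def x1lr20 : List Int := [21,0,0,0,0,0,0,0,0,0,126,21,42,84,126,84,0,105,42,21,6,0,0,0,0,0,0,0,0,0,36,6,12,24,36,24,0,30,12,6]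
def x1lr21 : List Int := [0,21,0,0,0,0,0,0,0,0,42,84,84,21,126,105,84,84,21,126,0,6,0,0,0,0,0,0,0,0,12,24,24,6,36,30,24,24,6,36]
def x1lr22 : List Int := [0,0,21,0,0,0,0,0,0,0,21,21,42,0,42,42,105,126,42,105,0,0,6,0,0,0,0,0,0,0,6,6,12,0,12,12,30,36,12,30]
def x1lr23 : List Int := [0,0,0,21,0,0,0,0,0,0,42,126,84,21,42,21,42,42,42,63,0,0,0,6,0,0,0,0,0,0,12,36,24,6,12,6,12,12,12,18]
def x1lr24 : List Int := [0,0,0,0,21,0,0,0,0,0,42,0,42,63,63,21,21,126,105,21,0,0,0,0,6,0,0,0,0,0,12,0,12,18,18,6,6,36,30,6]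
def x1lr25 : List Int := [0,0,0,0,0,21,0,0,0,0,105,84,84,63,21,84,21,84,63,63,0,0,0,0,0,6,0,0,0,0,30,24,24,18,6,24,6,24,18,18]
def x1lr26 : List Int := [0,0,0,0,0,0,21,0,0,0,63,42,105,126,126,63,84,0,105,0,0,0,0,0,0,0,6,0,0,0,18,12,30,36,36,18,24,0,30,0]
def x1lr27 : List Int := [0,0,0,0,0,0,0,21,0,0,105,105,126,126,84,0,63,0,84,42,0,0,0,0,0,0,0,6,0,0,30,30,36,36,24,0,18,0,24,12]
def x1lr28 : List Int := [0,0,0,0,0,0,0,0,21,0,84,21,84,84,63,42,0,84,126,105,0,0,0,0,0,0,0,0,6,0,24,6,24,24,18,12,0,24,36,30]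
def x1lr29 : List Int := [0,0,0,0,0,0,0,0,0,21,126,105,63,21,63,0,42,105,126,126,0,0,0,0,0,0,0,0,0,6,36,30,18,6,18,0,12,30,36,36]
def x1lr30 : List Int := [0,0,0,0,0,0,0,0,0,0,147,0,0,0,0,0,0,0,0,0,0,0,0,0,0,0,0,0,0,0,42,0,0,0,0,0,0,0,0,0]
def x1lr31 : List Int := [0,0,0,0,0,0,0,0,0,0,0,147,0,0,0,0,0,0,0,0,0,0,0,0,0,0,0,0,0,0,0,42,0,0,0,0,0,0,0,0]
def x1lr32 : List Int := [0,0,0,0,0,0,0,0,0,0,0,0,147,0,0,0,0,0,0,0,0,0,0,0,0,0,0,0,0,0,0,0,42,0,0,0,0,0,0,0]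
def x1lr33 : List Int := [0,0,0,0,0,0,0,0,0,0,0,0,0,147,0,0,0,0,0,0,0,0,0,0,0,0,0,0,0,0,0,0,0,42,0,0,0,0,0,0]
def x1lr34 : List Int := [0,0,0,0,0,0,0,0,0,0,0,0,0,0,147,0,0,0,0,0,0,0,0,0,0,0,0,0,0,0,0,0,0,0,42,0,0,0,0,0]
def x1lr35 : List Int := [0,0,0,0,0,0,0,0,0,0,0,0,0,0,0,147,0,0,0,0,0,0,0,0,0,0,0,0,0,0,0,0,0,0,0,42,0,0,0,0]
def x1lr36 : List Int := [0,0,0,0,0,0,0,0,0,0,0,0,0,0,0,0,147,0,0,0,0,0,0,0,0,0,0,0,0,0,0,0,0,0,0,0,42,0,0,0]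
def x1lr37 : List Int := [0,0,0,0,0,0,0,0,0,0,0,0,0,0,0,0,0,147,0,0,0,0,0,0,0,0,0,0,0,0,0,0,0,0,0,0,0,42,0,0]
def x1lr38 : List Int := [0,0,0,0,0,0,0,0,0,0,0,0,0,0,0,0,0,0,147,0,0,0,0,0,0,0,0,0,0,0,0,0,0,0,0,0,0,0,42,0]
def x1lr39 : List Int := [0,0,0,0,0,0,0,0,0,0,0,0,0,0,0,0,0,0,0,147,0,0,0,0,0,0,0,0,0,0,0,0,0,0,0,0,0,0,0,42]
def x1l : List (List Int) := [x1lr0,x1lr1,x1lr2,x1lr3,x1lr4,x1lr5,x1lr6,x1lr7,x1lr8,x1lr9,x1lr10,x1lr11,x1lr12,x1lr13,x1lr14,x1lr15,x1lr16,x1lr17,x1lr18,x1lr19,x1lr20,x1lr21,x1lr22,x1lr23,x1lr24,x1lr25,x1lr26,x1lr27,x1lr28,x1lr29,x1lr30,x1lr31,x1lr32,x1lr33,x1lr34,x1lr35,x1lr36,x1lr37,x1lr38,x1lr39]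
def g21lr0 : List Int := [2604,2541,2877,2457,2037,2205,1953,1281,2457,1869,504,693,630,588,546,546,441,525,588,420,1575,2016,1260,1764,1386,2058,2016,2268,2016,2268,168,840,672,420,168,420,84,336,672,294]
def g21lr1 : List Int := [2541,3528,3213,3423,2877,2751,2247,1701,2625,2583,798,756,798,861,672,693,714,714,819,630,2226,2289,1764,1764,1932,2478,2562,2814,2730,2940,714,420,462,798,168,294,420,462,840,546]
def g21lr2 : List Int := [2877,3213,4368,3381,3171,3003,2835,1911,3339,2415,945,945,882,777,924,840,735,756,882,735,2436,3108,1869,2268,1638,2688,2688,2940,2688,3276,798,840,672,84,672,672,294,168,714,672]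
def g21lr3 : List Int := [2457,3423,3381,4494,3717,3591,2331,1911,2877,2835,672,546,630,693,630,651,630,630,630,336,2982,2772,1974,1659,2268,2562,3192,2814,2688,2646,714,168,462,798,714,798,672,672,672,42]
def g21lr4 : List Int := [2037,2877,3171,3717,3654,3045,2289,1701,2583,2625,714,567,714,651,651,735,693,546,609,462,2352,2646,1722,1512,1533,2226,2814,2562,2184,2142,714,84,672,588,546,840,798,168,294,294]
def g21lr5 : List Int := [2205,2751,3003,3591,3045,3360,2037,1911,2457,2667,525,546,546,567,609,504,609,504,525,294,2226,2562,1764,1680,1764,1995,2856,2604,2058,2310,336,462,462,546,840,420,840,420,546,42]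
def g21lr6 : List Int := [1953,2247,2835,2331,2289,2037,2142,1281,2289,1701,651,672,567,546,546,609,546,483,567,483,1512,2058,1260,1554,924,1890,1743,1974,1596,2058,588,714,336,210,168,588,420,84,294,420]
def g21lr7 : List Int := [1281,1701,1911,1911,1701,1911,1281,1302,1323,1575,399,399,378,378,420,315,441,315,420,273,1092,1428,1008,1050,924,1092,1638,1659,1218,1554,294,336,210,210,462,42,588,42,462,168]
def g21lr8 : List Int := [2457,2625,3339,2877,2583,2457,2289,1323,3234,2247,798,861,756,798,819,798,651,756,672,693,2268,2814,1638,1890,1428,2352,2100,2310,2247,2520,420,798,462,462,588,714,42,462,168,672]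
def g21lr9 : List Int := [1869,2583,2415,2835,2625,2667,1701,1575,2247,2814,630,651,735,777,693,609,756,609,588,588,1764,2310,1638,1512,1428,1722,2394,2478,1974,2079,210,294,546,840,588,84,714,294,210,546]
def g21lr10 : List Int := [504,798,945,672,714,525,651,399,798,630,378,315,315,315,315,315,315,315,315,357,546,756,567,462,336,609,399,567,672,840,273,84,42,42,84,84,84,84,42,420]
def g21lr11 : List Int := [693,756,945,546,567,546,672,399,861,651,315,378,315,315,315,315,315,315,315,357,357,798,567,588,294,588,378,567,609,819,42,273,84,42,42,84,84,84,84,420]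
def g21lr12 : List Int := [630,798,882,630,714,546,567,378,756,735,315,315,378,315,315,315,315,315,315,357,420,756,588,504,378,588,483,630,714,777,84,42,273,84,42,42,84,84,84,420]
def g21lr13 : List Int := [588,861,777,693,651,567,546,378,798,777,315,315,315,378,315,315,315,315,315,357,504,693,504,441,399,567,504,630,714,735,84,84,42,273,84,42,42,84,84,420]
def g21lr14 : List Int := [546,672,924,630,651,609,546,420,819,693,315,315,315,315,378,315,315,315,315,357,504,840,546,462,357,483,504,546,651,735,42,84,84,42,273,84,42,42,84,420]
def g21lr15 : List Int := [546,693,840,651,735,504,609,315,798,609,315,315,315,315,315,378,315,315,315,357,420,777,546,399,273,546,399,420,588,588,42,42,84,84,42,273,84,42,42,420]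
def g21lr16 : List Int := [441,714,735,630,693,609,546,441,651,756,315,315,315,315,315,315,378,315,315,357,336,756,651,420,315,441,420,483,546,672,42,42,42,84,84,42,273,84,42,420]
def g21lr17 : List Int := [525,714,756,630,546,504,483,315,756,609,315,315,315,315,315,315,315,378,315,357,483,756,672,420,462,546,294,378,672,777,42,42,42,42,84,84,42,273,84,420]
def g21lr18 : List Int := [588,819,882,630,609,525,567,420,672,588,315,315,315,315,315,315,315,315,378,357,378,651,546,420,399,525,441,504,714,798,84,42,42,42,42,84,84,42,273,420]
def g21lr19 : List Int := [420,630,735,336,462,294,483,273,693,588,357,357,357,357,357,357,357,357,357,462,273,714,567,399,231,441,210,378,609,714,42,42,42,42,42,42,42,42,42,609]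
def g21lr20 : List Int := [1575,2226,2436,2982,2352,2226,1512,1092,2268,1764,546,357,420,504,504,420,336,483,378,273,2520,2016,1260,1134,1638,1890,2016,1890,2016,2016,756,126,252,504,756,504,0,630,252,126]
def g21lr21 : List Int := [2016,2289,3108,2772,2646,2562,2058,1428,2814,2310,756,798,756,693,840,777,756,756,651,714,2016,3024,2016,1764,1386,2016,2016,2016,2016,2394,252,504,504,126,756,630,504,504,126,756]
def g21lr22 : List Int := [1260,1764,1869,1974,1722,1764,1260,1008,1638,1638,567,567,588,504,546,546,651,672,546,567,1260,2016,1890,1134,1260,1386,1134,1134,1512,1890,126,126,252,0,252,252,630,756,252,630]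
def g21lr23 : List Int := [1764,1764,2268,1659,1512,1680,1554,1050,1890,1512,462,588,504,441,462,399,420,420,420,399,1134,1764,1134,1512,882,1512,1386,1764,1386,1890,252,756,504,126,252,126,252,252,252,378]
def g21lr24 : List Int := [1386,1932,1638,2268,1533,1764,924,924,1428,1428,336,294,378,399,357,273,315,462,399,231,1638,1386,1260,882,1638,1386,1512,1386,1764,1764,252,0,252,378,378,126,126,756,630,126]
def g21lr25 : List Int := [2058,2478,2688,2562,2226,1995,1890,1092,2352,1722,609,588,588,567,483,546,441,546,525,441,1890,2016,1386,1512,1386,2142,1764,2016,2016,2268,630,504,504,378,126,504,126,504,378,378]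
def g21lr26 : List Int := [2016,2562,2688,3192,2814,2856,1743,1638,2100,2394,399,378,483,504,504,399,420,294,441,210,2016,2016,1134,1386,1512,1764,2898,2646,2016,1890,378,252,630,756,756,378,504,0,630,0]
def g21lr27 : List Int := [2268,2814,2940,2814,2562,2604,1974,1659,2310,2478,567,567,630,630,546,420,483,378,504,378,1890,2016,1134,1764,1386,2016,2646,3024,2142,2394,630,630,756,756,504,0,378,0,504,252]
def g21lr28 : List Int := [2016,2730,2688,2688,2184,2058,1596,1218,2247,1974,672,609,714,714,651,588,546,672,714,609,2016,2016,1512,1386,1764,2016,2016,2142,2520,2520,504,126,504,504,378,252,0,504,756,630]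
def g21lr29 : List Int := [2268,2940,3276,2646,2142,2310,2058,1554,2520,2079,840,819,777,735,735,588,672,777,798,714,2016,2394,1890,1890,1764,2268,1890,2394,2520,3276,756,630,378,126,378,0,252,630,756,756]
def g21lr30 : List Int := [168,714,798,714,714,336,588,294,420,210,273,42,84,84,42,42,42,42,84,42,756,252,126,252,252,630,378,630,504,756,882,0,0,0,0,0,0,0,0,0]
def g21lr31 : List Int := [840,420,840,168,84,462,714,336,798,294,84,273,42,84,84,42,42,42,42,42,126,504,126,756,0,504,252,630,126,630,0,882,0,0,0,0,0,0,0,0]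
def g21lr32 : List Int := [672,462,672,462,672,462,336,210,462,546,42,84,273,42,84,84,42,42,42,42,252,504,252,504,252,504,630,756,504,378,0,0,882,0,0,0,0,0,0,0]
def g21lr33 : List Int := [420,798,84,798,588,546,210,210,462,840,42,42,84,273,42,84,84,42,42,42,504,126,0,126,378,378,756,756,504,126,0,0,0,882,0,0,0,0,0,0]
def g21lr34 : List Int := [168,168,672,714,546,840,168,462,588,588,84,42,42,84,273,42,84,84,42,42,756,756,252,252,378,126,756,504,378,378,0,0,0,0,882,0,0,0,0,0]
def g21lr35 : List Int := [420,294,672,798,840,420,588,42,714,84,84,84,42,42,84,273,42,84,84,42,504,630,252,126,126,504,378,0,252,0,0,0,0,0,0,882,0,0,0,0]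
def g21lr36 : List Int := [84,420,294,672,798,840,420,588,42,714,84,84,84,42,42,84,273,42,84,42,0,504,630,252,126,126,504,378,0,252,0,0,0,0,0,0,882,0,0,0]
def g21lr37 : List Int := [336,462,168,672,168,420,84,42,462,294,84,84,84,84,42,42,84,273,42,42,630,504,756,252,756,504,0,0,504,630,0,0,0,0,0,0,0,882,0,0]
def g21lr38 : List Int := [672,840,714,672,294,546,294,462,168,210,42,84,84,84,84,42,42,84,273,42,252,126,252,252,630,378,630,504,756,756,0,0,0,0,0,0,0,0,882,0]
def g21lr39 : List Int := [294,546,672,42,294,42,420,168,672,546,420,420,420,420,420,420,420,420,420,609,126,756,630,378,126,378,0,252,630,756,0,0,0,0,0,0,0,0,0,882]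
def g21l : List (List Int) := [g21lr0,g21lr1,g21lr2,g21lr3,g21lr4,g21lr5,g21lr6,g21lr7,g21lr8,g21lr9,g21lr10,g21lr11,g21lr12,g21lr13,g21lr14,g21lr15,g21lr16,g21lr17,g21lr18,g21lr19,g21lr20,g21lr21,g21lr22,g21lr23,g21lr24,g21lr25,g21lr26,g21lr27,g21lr28,g21lr29,g21lr30,g21lr31,g21lr32,g21lr33,g21lr34,g21lr35,g21lr36,g21lr37,g21lr38,g21lr39]
def gzlr0 : List Int := [124,121,137,117,97,105,93,61,117,89,24,33,30,28,26,26,21,25,28,20,75,96,60,84,66,98,96,108,96,108,8,40,32,20,8,20,4,16,32,14]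
def gzlr1 : List Int := [121,168,153,163,137,131,107,81,125,123,38,36,38,41,32,33,34,34,39,30,106,109,84,84,92,118,122,134,130,140,34,20,22,38,8,14,20,22,40,26]
def gzlr2 : List Int := [137,153,208,161,151,143,135,91,159,115,45,45,42,37,44,40,35,36,42,35,116,148,89,108,78,128,128,140,128,156,38,40,32,4,32,32,14,8,34,32]
def gzlr3 : List Int := [117,163,161,214,177,171,111,91,137,135,32,26,30,33,30,31,30,30,30,16,142,132,94,79,108,122,152,134,128,126,34,8,22,38,34,38,32,32,32,2]
def gzlr4 : List Int := [97,137,151,177,174,145,109,81,123,125,34,27,34,31,31,35,33,26,29,22,112,126,82,72,73,106,134,122,104,102,34,4,32,28,26,40,38,8,14,14]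
def gzlr5 : List Int := [105,131,143,171,145,160,97,91,117,127,25,26,26,27,29,24,29,24,25,14,106,122,84,80,84,95,136,124,98,110,16,22,22,26,40,20,40,20,26,2]
def gzlr6 : List Int := [93,107,135,111,109,97,102,61,109,81,31,32,27,26,26,29,26,23,27,23,72,98,60,74,44,90,83,94,76,98,28,34,16,10,8,28,20,4,14,20]
def gzlr7 : List Int := [61,81,91,91,81,91,61,62,63,75,19,19,18,18,20,15,21,15,20,13,52,68,48,50,44,52,78,79,58,74,14,16,10,10,22,2,28,2,22,8]
def gzlr8 : List Int := [117,125,159,137,123,117,109,63,154,107,38,41,36,38,39,38,31,36,32,33,108,134,78,90,68,112,100,110,107,120,20,38,22,22,28,34,2,22,8,32]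
def gzlr9 : List Int := [89,123,115,135,125,127,81,75,107,134,30,31,35,37,33,29,36,29,28,28,84,110,78,72,68,82,114,118,94,99,10,14,26,40,28,4,34,14,10,26]
def gzlr10 : List Int := [24,38,45,32,34,25,31,19,38,30,18,15,15,15,15,15,15,15,15,17,26,36,27,22,16,29,19,27,32,40,13,4,2,2,4,4,4,4,2,20]
def gzlr11 : List Int := [33,36,45,26,27,26,32,19,41,31,15,18,15,15,15,15,15,15,15,17,17,38,27,28,14,28,18,27,29,39,2,13,4,2,2,4,4,4,4,20]
def gzlr12 : List Int := [30,38,42,30,34,26,27,18,36,35,15,15,18,15,15,15,15,15,15,17,20,36,28,24,18,28,23,30,34,37,4,2,13,4,2,2,4,4,4,20]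
def gzlr13 : List Int := [28,41,37,33,31,27,26,18,38,37,15,15,15,18,15,15,15,15,15,17,24,33,24,21,19,27,24,30,34,35,4,4,2,13,4,2,2,4,4,20]
def gzlr14 : List Int := [26,32,44,30,31,29,26,20,39,33,15,15,15,15,18,15,15,15,15,17,24,40,26,22,17,23,24,26,31,35,2,4,4,2,13,4,2,2,4,20]
def gzlr15 : List Int := [26,33,40,31,35,24,29,15,38,29,15,15,15,15,15,18,15,15,15,17,20,37,26,19,13,26,19,20,28,28,2,2,4,4,2,13,4,2,2,20]
def gzlr16 : List Int := [21,34,35,30,33,29,26,21,31,36,15,15,15,15,15,15,18,15,15,17,16,36,31,20,15,21,20,23,26,32,2,2,2,4,4,2,13,4,2,20]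
def gzlr17 : List Int := [25,34,36,30,26,24,23,15,36,29,15,15,15,15,15,15,15,18,15,17,23,36,32,20,22,26,14,18,32,37,2,2,2,2,4,4,2,13,4,20]
def gzlr18 : List Int := [28,39,42,30,29,25,27,20,32,28,15,15,15,15,15,15,15,15,18,17,18,31,26,20,19,25,21,24,34,38,4,2,2,2,2,4,4,2,13,20]
def gzlr19 : List Int := [20,30,35,16,22,14,23,13,33,28,17,17,17,17,17,17,17,17,17,22,13,34,27,19,11,21,10,18,29,34,2,2,2,2,2,2,2,2,2,29]
def gzlr20 : List Int := [75,106,116,142,112,106,72,52,108,84,26,17,20,24,24,20,16,23,18,13,120,96,60,54,78,90,96,90,96,96,36,6,12,24,36,24,0,30,12,6]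
def gzlr21 : List Int := [96,109,148,132,126,122,98,68,134,110,36,38,36,33,40,37,36,36,31,34,96,144,96,84,66,96,96,96,96,114,12,24,24,6,36,30,24,24,6,36]
def gzlr22 : List Int := [60,84,89,94,82,84,60,48,78,78,27,27,28,24,26,26,31,32,26,27,60,96,90,54,60,66,54,54,72,90,6,6,12,0,12,12,30,36,12,30]
def gzlr23 : List Int := [84,84,108,79,72,80,74,50,90,72,22,28,24,21,22,19,20,20,20,19,54,84,54,72,42,72,66,84,66,90,12,36,24,6,12,6,12,12,12,18]
def gzlr24 : List Int := [66,92,78,108,73,84,44,44,68,68,16,14,18,19,17,13,15,22,19,11,78,66,60,42,78,66,72,66,84,84,12,0,12,18,18,6,6,36,30,6]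
def gzlr25 : List Int := [98,118,128,122,106,95,90,52,112,82,29,28,28,27,23,26,21,26,25,21,90,96,66,72,66,102,84,96,96,108,30,24,24,18,6,24,6,24,18,18]
def gzlr26 : List Int := [96,122,128,152,134,136,83,78,100,114,19,18,23,24,24,19,20,14,21,10,96,96,54,66,72,84,138,126,96,90,18,12,30,36,36,18,24,0,30,0]
def gzlr27 : List Int := [108,134,140,134,122,124,94,79,110,118,27,27,30,30,26,20,23,18,24,18,90,96,54,84,66,96,126,144,102,114,30,30,36,36,24,0,18,0,24,12]
def gzlr28 : List Int := [96,130,128,128,104,98,76,58,107,94,32,29,34,34,31,28,26,32,34,29,96,96,72,66,84,96,96,102,120,120,24,6,24,24,18,12,0,24,36,30]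
def gzlr29 : List Int := [108,140,156,126,102,110,98,74,120,99,40,39,37,35,35,28,32,37,38,34,96,114,90,90,84,108,90,114,120,156,36,30,18,6,18,0,12,30,36,36]
def gzlr30 : List Int := [8,34,38,34,34,16,28,14,20,10,13,2,4,4,2,2,2,2,4,2,36,12,6,12,12,30,18,30,24,36,42,0,0,0,0,0,0,0,0,0]
def gzlr31 : List Int := [40,20,40,8,4,22,34,16,38,14,4,13,2,4,4,2,2,2,2,2,6,24,6,36,0,24,12,30,6,30,0,42,0,0,0,0,0,0,0,0]
def gzlr32 : List Int := [32,22,32,22,32,22,16,10,22,26,2,4,13,2,4,4,2,2,2,2,12,24,12,24,12,24,30,36,24,18,0,0,42,0,0,0,0,0,0,0]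
def gzlr33 : List Int := [20,38,4,38,28,26,10,10,22,40,2,2,4,13,2,4,4,2,2,2,24,6,0,6,18,18,36,36,24,6,0,0,0,42,0,0,0,0,0,0]
def gzlr34 : List Int := [8,8,32,34,26,40,8,22,28,28,4,2,2,4,13,2,4,4,2,2,36,36,12,12,18,6,36,24,18,18,0,0,0,0,42,0,0,0,0,0]
def gzlr35 : List Int := [20,14,32,38,40,20,28,2,34,4,4,4,2,2,4,13,2,4,4,2,24,30,12,6,6,24,18,0,12,0,0,0,0,0,0,42,0,0,0,0]
def gzlr36 : List Int := [4,20,14,32,38,40,20,28,2,34,4,4,4,2,2,4,13,2,4,2,0,24,30,12,6,6,24,18,0,12,0,0,0,0,0,0,42,0,0,0]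
def gzlr37 : List Int := [16,22,8,32,8,20,4,2,22,14,4,4,4,4,2,2,4,13,2,2,30,24,36,12,36,24,0,0,24,30,0,0,0,0,0,0,0,42,0,0]
def gzlr38 : List Int := [32,40,34,32,14,26,14,22,8,10,2,4,4,4,4,2,2,4,13,2,12,6,12,12,30,18,30,24,36,36,0,0,0,0,0,0,0,0,42,0]
def gzlr39 : List Int := [14,26,32,2,14,2,20,8,32,26,20,20,20,20,20,20,20,20,20,29,6,36,30,18,6,18,0,12,30,36,0,0,0,0,0,0,0,0,0,42]
def gzl : List (List Int) := [gzlr0,gzlr1,gzlr2,gzlr3,gzlr4,gzlr5,gzlr6,gzlr7,gzlr8,gzlr9,gzlr10,gzlr11,gzlr12,gzlr13,gzlr14,gzlr15,gzlr16,gzlr17,gzlr18,gzlr19,gzlr20,gzlr21,gzlr22,gzlr23,gzlr24,gzlr25,gzlr26,gzlr27,gzlr28,gzlr29,gzlr30,gzlr31,gzlr32,gzlr33,gzlr34,gzlr35,gzlr36,gzlr37,gzlr38,gzlr39]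
def plr0 : List Int := [0,0,-1,0,0,0,0,0,0,0,1,0,0,0,0,0,0,0,0,1,0,-1,0,0,-1,-1,0,0,0,0,2,2,2,1,2,2,1,2,2,1]
def plr1 : List Int := [0,0,1,0,0,0,0,0,0,0,0,0,0,0,0,0,0,-1,0,0,-1,0,0,0,1,1,-1,0,-1,0,0,-1,0,1,1,0,0,0,0,0]
def plr2 : List Int := [0,0,-1,0,0,0,0,0,0,0,0,0,1,0,0,0,0,0,0,1,0,-1,0,0,-1,-1,0,0,0,0,2,2,2,1,2,2,1,2,2,1]
def plr3 : List Int := [0,0,-1,0,0,0,0,0,0,0,0,0,0,0,0,0,1,0,0,1,0,-1,0,0,-1,-1,0,0,0,0,2,2,2,1,2,2,1,2,2,1]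
def plr4 : List Int := [0,0,0,0,0,0,0,0,0,-1,1,0,0,0,0,0,0,0,0,-1,0,1,0,1,1,1,1,0,0,0,-2,-2,-2,-1,-2,-2,-1,-2,-2,-1]
def plr5 : List Int := [0,0,-1,0,0,0,0,0,0,0,0,0,0,0,1,0,0,0,0,1,0,-1,0,0,-1,-1,0,0,0,0,2,2,2,1,2,2,1,2,2,1]
def plr6 : List Int := [0,0,0,0,0,0,0,0,0,0,0,0,0,1,0,0,0,-1,0,1,-1,-1,0,0,0,0,-1,0,-1,0,2,1,2,2,3,2,1,2,2,1]
def plr7 : List Int := [0,0,-1,0,0,0,0,0,0,0,0,0,0,0,0,1,0,0,0,1,0,-1,0,0,-1,-1,0,0,0,0,2,2,2,1,2,2,1,2,2,1]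
def plr8 : List Int := [0,0,0,0,0,0,0,0,0,0,0,1,0,0,0,0,0,-1,0,1,-1,-1,0,0,0,0,-1,0,-1,0,2,1,2,2,3,2,1,2,2,1]
def plr9 : List Int := [0,0,0,0,-1,0,1,1,0,0,0,-1,0,-1,1,0,0,0,-1,-1,1,1,0,1,1,1,0,-1,1,1,-3,-3,-2,-1,-3,-2,-1,-4,-3,-2]
def plr10 : List Int := [0,0,1,1,0,0,0,-1,0,0,0,0,1,0,1,-1,1,-2,0,1,-2,-1,-2,-1,-1,1,-2,0,-1,-1,3,2,3,3,5,2,3,5,4,3]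
def plr11 : List Int := [0,0,0,0,0,1,0,0,0,0,0,-1,0,0,0,0,0,0,0,0,0,1,-1,0,0,-1,-1,0,1,0,0,0,0,0,-1,0,0,0,0,0]
def plr12 : List Int := [0,0,1,0,1,0,0,0,1,-1,1,1,-2,0,0,-1,-1,0,0,0,0,1,-1,0,0,0,0,0,-2,0,-1,-2,0,1,-1,-2,0,1,1,1]
def plr13 : List Int := [0,0,0,-1,0,1,1,1,0,0,0,-1,-1,-1,0,1,-1,0,0,-1,1,2,0,2,1,0,0,0,1,1,-4,-5,-4,-2,-5,-3,-3,-4,-4,-3]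
def plr14 : List Int := [0,0,1,0,0,0,0,0,0,0,0,-1,-1,2,-1,-1,1,0,0,-1,0,1,0,-1,1,0,0,0,0,1,-2,-1,-1,-1,-2,-1,-1,-2,-2,-1]
def plr15 : List Int := [0,0,1,0,0,0,1,0,0,1,-1,-1,0,1,0,-1,1,-2,0,0,0,-1,0,0,0,1,-2,0,0,0,-1,-1,0,0,1,0,0,0,0,0]
def plr16 : List Int := [0,0,1,0,1,-1,0,0,1,0,0,0,-1,1,-2,0,0,0,0,0,0,0,0,0,0,0,1,-1,-1,-1,0,0,0,0,0,-2,0,1,1,1]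
def plr17 : List Int := [0,0,-1,0,-1,0,0,1,0,-1,0,0,1,0,0,1,1,-1,0,1,-1,-1,1,0,0,-1,0,-1,0,1,3,2,3,3,3,3,1,1,1,0]
def plr18 : List Int := [0,0,0,0,1,0,1,-1,0,0,1,0,0,0,-1,1,-2,0,0,0,0,0,0,0,0,0,0,0,1,-1,-1,0,-1,-1,0,-2,0,0,0,0]
def plr19 : List Int := [0,0,-1,0,0,2,0,-1,1,-1,-1,0,1,0,0,1,0,0,-1,0,0,0,0,-1,0,-2,0,1,1,0,1,1,0,-1,-1,0,0,0,0,1]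
def plr20 : List Int := [0,0,0,0,0,0,0,0,0,0,0,-1,0,0,0,0,1,0,0,0,0,0,-1,0,-1,0,-1,0,0,1,0,0,1,1,1,1,1,1,1,0]
def plr21 : List Int := [0,0,1,0,0,0,0,0,0,1,-1,0,1,1,-2,-1,0,0,0,0,0,1,0,-1,0,0,0,0,0,-1,0,0,-1,-1,-1,-1,-1,0,0,0]
def plr22 : List Int := [0,0,0,-1,0,0,0,0,0,0,0,0,0,0,0,0,0,1,0,0,1,1,-1,0,0,-1,0,0,1,0,0,0,0,0,-1,0,1,0,0,-1]
def plr23 : List Int := [0,1,0,0,-1,1,1,0,0,0,-1,0,1,0,0,-1,0,-1,0,1,0,-1,0,-1,1,-1,-2,0,0,0,1,1,2,1,2,2,1,0,0,1]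
def plr24 : List Int := [0,0,0,-1,0,0,0,0,0,0,-1,1,0,-1,-1,2,1,0,0,0,1,0,-1,0,1,0,0,0,0,0,0,0,0,0,0,0,1,0,0,0]
def plr25 : List Int := [0,0,0,0,0,0,0,0,0,0,0,0,0,0,0,0,0,1,-1,0,1,0,-1,0,0,0,1,-1,1,-1,0,1,0,-1,-1,-1,1,0,0,1]
def plr26 : List Int := [1,0,0,0,0,0,0,0,0,0,-1,0,0,0,0,0,0,0,0,-1,0,0,1,1,0,0,0,0,1,0,-1,-2,-2,-1,-1,-1,-1,-2,-2,-1]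
def plr27 : List Int := [0,0,0,0,0,-1,0,0,0,0,0,0,-1,1,0,-1,-1,2,1,0,0,0,1,0,-1,0,1,0,0,0,0,0,0,0,0,0,0,0,0,-1]
def plr28 : List Int := [0,0,0,-1,0,1,1,0,0,0,0,-1,0,1,-1,0,0,-1,0,-1,1,1,1,1,1,0,0,1,1,1,-4,-4,-4,-3,-4,-2,-3,-4,-4,-3]
def plr29 : List Int := [0,-1,0,0,0,0,-2,0,0,1,0,1,1,0,-1,0,1,0,0,1,-1,0,0,-1,0,0,1,1,-1,-2,4,3,1,0,1,2,0,3,3,2]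
def plr30 : List Int := [0,0,0,0,-1,-1,0,0,0,0,0,1,2,-1,-1,1,1,-1,0,0,-1,0,0,0,1,1,0,0,0,0,1,0,0,1,2,1,1,0,0,-1]
def plr31 : List Int := [0,0,0,0,-1,2,1,0,0,-1,-1,1,0,0,0,0,-1,-1,0,0,0,1,1,0,2,-1,-1,1,1,1,-2,-3,-2,-1,-3,-1,-2,-4,-4,-2]
def plr32 : List Int := [0,0,0,0,0,0,0,-1,0,1,0,0,0,0,0,0,0,0,0,1,-1,-1,-1,-1,0,0,-1,0,0,0,2,2,2,1,3,2,2,2,2,1]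
def plr33 : List Int := [0,0,-1,1,1,0,0,0,0,0,-1,-1,2,-1,0,0,0,0,0,1,0,-1,0,0,-2,0,0,0,0,-2,2,3,1,0,2,0,0,3,3,3]
def plr34 : List Int := [0,1,-1,0,1,-1,1,1,1,0,0,0,0,-2,0,1,1,-1,0,1,-1,-2,-1,0,-2,-1,-2,-2,-3,-1,6,4,7,6,8,3,3,7,8,5]
def plr35 : List Int := [1,0,0,0,0,0,1,-1,0,0,1,-1,0,0,0,-1,0,-1,0,-2,1,1,1,2,1,2,0,2,1,1,-7,-7,-7,-5,-5,-4,-3,-6,-6,-4]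
def plr36 : List Int := [0,0,0,0,0,-1,0,0,0,1,1,1,1,0,0,0,2,0,0,0,-2,-3,-3,-2,-2,-1,-2,-2,-3,-3,11,9,11,8,12,7,7,12,12,9]
def plr37 : List Int := [0,-2,0,1,-1,1,0,0,-1,0,0,-1,0,1,1,0,0,1,0,0,-1,1,0,-1,0,-1,0,0,2,0,2,2,1,1,-1,1,0,0,0,0]
def plr38 : List Int := [0,0,1,-1,0,0,0,0,0,0,0,0,1,1,0,0,1,1,-1,1,-1,-2,-3,-1,-2,-1,-2,-1,-1,-2,7,5,7,6,8,5,6,9,8,5]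
def plr39 : List Int := [0,0,0,0,0,0,0,1,-1,0,0,0,0,0,0,0,0,0,0,0,1,0,0,0,-1,0,1,-1,0,1,-1,0,0,0,-1,0,-1,0,-1,0]
def pl : List (List Int) := [plr0,plr1,plr2,plr3,plr4,plr5,plr6,plr7,plr8,plr9,plr10,plr11,plr12,plr13,plr14,plr15,plr16,plr17,plr18,plr19,plr20,plr21,plr22,plr23,plr24,plr25,plr26,plr27,plr28,plr29,plr30,plr31,plr32,plr33,plr34,plr35,plr36,plr37,plr38,plr39]
def y1lr0 : List Int := [-3,0,0,-3,-4,-5,1,-1,-2,-5,1,-1,-2,-1,-2,-2,-2,-2,-1,-1,1,-6,-5,-1,-3,0,-3,1,-1,2,7,2,-4,0,-2,-2,-2,-2,0,-1]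
def y1lr1 : List Int := [-3,-3,2,3,4,2,-1,0,0,-2,0,-1,0,-1,1,1,0,1,0,0,3,4,3,-2,2,0,0,-4,0,-1,0,-4,0,-4,4,4,0,1,0,0]
def y1lr2 : List Int := [3,0,-3,-5,-4,-4,-3,-2,-4,0,-2,-1,1,-1,-2,-2,-2,-2,-1,-1,-5,-6,-4,1,-1,-1,1,4,1,-1,-2,0,7,2,-4,-4,-2,-2,2,-1]
def y1lr3 : List Int := [-6,-4,-10,-5,-5,-1,-4,1,-9,1,-2,-1,-2,-1,-2,-2,1,-2,-1,-1,-9,-6,-1,-3,-4,-8,-2,-3,-7,-6,-4,0,-4,2,-2,-4,7,-2,0,-1]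
def y1lr4 : List Int := [5,6,3,2,2,1,2,1,2,2,1,1,2,2,1,1,1,1,2,1,1,0,0,3,3,4,3,5,5,3,1,0,4,2,-2,-2,-2,0,2,1]
def y1lr5 : List Int := [-1,-6,-1,-5,-7,-1,-4,0,-1,-2,-2,-1,-2,-1,1,-2,-2,-2,-1,-1,-1,-2,-6,-1,-2,-6,2,0,-2,-3,-4,2,-2,0,7,-2,-4,-4,2,-1]
def y1lr6 : List Int := [-2,0,-6,1,-3,-1,-5,-2,-2,0,-2,-2,-2,1,-1,-1,-2,-1,-1,-1,2,-5,-5,-4,2,-2,2,0,1,-4,-2,-2,-4,7,2,0,-4,-1,2,-1]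
def y1lr7 : List Int := [-1,-5,-5,-4,-3,-6,-1,-5,-2,-6,-2,-1,-2,-1,-2,1,-2,-2,-1,-1,-5,-5,-6,-4,-6,-3,-3,-6,-5,-10,-4,0,-2,2,-4,7,-2,-4,0,-1]
def y1lr8 : List Int := [3,-5,2,-6,-7,-2,1,-1,1,-6,-2,1,-2,-2,-1,-1,-2,-1,-1,-1,-5,0,-2,3,-3,-1,-4,-3,-4,0,-4,7,-2,-4,0,2,-2,-1,2,-1]
def y1lr9 : List Int := [5,6,8,7,7,5,4,3,3,3,0,-1,1,-1,0,-1,-1,-1,0,-1,6,4,2,4,5,6,8,8,7,7,4,-1,6,-1,1,0,0,0,3,-1]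
def y1lr10 : List Int := [2,5,6,6,5,4,4,3,3,1,1,1,0,1,1,1,1,0,2,1,3,3,1,1,2,3,4,2,4,4,2,0,-3,0,1,3,1,-2,4,1]
def y1lr11 : List Int := [2,2,-3,3,0,-1,-2,-2,-1,-2,-1,0,0,0,-1,1,0,1,1,0,-1,0,3,-2,4,1,-2,-5,3,-1,-4,-3,0,0,-4,4,0,4,4,0]
def y1lr12 : List Int := [2,4,1,3,0,0,0,0,1,-1,0,0,-1,1,0,0,-1,0,1,0,3,-1,-2,-1,3,2,2,1,4,2,1,-1,-2,2,0,1,-3,0,4,0]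
def y1lr13 : List Int := [-5,-4,-6,-1,-1,-3,-4,-3,-4,-3,-1,-2,-1,-1,-1,0,-1,0,-1,-1,0,-2,-1,-4,0,-2,-3,-5,-2,-5,0,-5,1,-1,0,1,-1,2,-2,-1]
def y1lr14 : List Int := [7,9,7,7,6,7,6,5,5,6,1,2,1,2,1,1,2,1,2,1,2,5,4,4,4,5,6,6,5,7,0,3,-1,2,-1,1,3,0,4,1]
def y1lr15 : List Int := [5,2,6,-1,1,3,4,3,3,3,0,1,1,0,0,-1,0,-1,0,0,-1,2,0,6,-1,3,3,7,1,5,1,5,4,-1,0,-3,1,-2,0,0]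
def y1lr16 : List Int := [-2,1,-4,1,0,0,0,-1,0,1,0,0,-1,1,-1,0,1,0,0,0,0,-1,1,-1,0,0,-1,-2,-1,-2,0,0,-3,3,-2,0,2,2,-2,0]
def y1lr17 : List Int := [-3,-4,-4,-5,-5,-6,-2,-4,-4,-7,-1,-1,-1,-2,-2,-1,-1,-1,-1,-1,-4,-5,-1,-2,-2,-2,-6,-6,-3,-3,0,0,-1,-2,-4,1,-1,1,0,-1]
def y1lr18 : List Int := [-1,2,0,2,2,-3,0,-2,-1,-4,1,-1,0,0,-1,1,-1,0,1,0,2,-3,-1,-3,1,2,-1,-2,3,-1,3,-4,0,0,-3,3,-2,0,2,0]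
def y1lr19 : List Int := [2,2,4,2,2,2,4,0,6,1,1,1,0,0,0,0,0,0,-1,0,4,4,2,3,0,4,0,2,1,4,3,4,-1,0,0,1,0,2,-3,0]
def y1lr20 : List Int := [6,4,7,4,5,3,5,2,2,0,0,1,1,-1,-1,1,0,0,1,0,-1,4,4,4,1,5,2,2,3,5,0,1,4,-4,-4,4,3,0,4,0]
def y1lr21 : List Int := [2,3,-1,-1,-2,0,1,0,2,3,0,1,0,1,-1,-1,0,0,-1,0,0,0,0,2,0,2,-1,3,0,3,1,4,-1,3,-2,-3,0,2,-2,0]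
def y1lr22 : List Int := [-1,0,0,-2,1,-2,0,0,0,2,1,0,1,0,0,-1,0,-1,-1,0,1,0,-2,1,-2,0,0,4,0,1,4,0,4,0,0,-4,0,-1,-4,0]
def y1lr23 : List Int := [-1,-5,-6,-6,-7,-5,-4,-4,-1,-3,-2,-1,-1,-1,-1,-2,-2,-1,-2,-1,-2,-4,-4,-2,-1,-3,-4,-3,-3,-4,-3,2,-1,2,0,-1,-4,1,-2,-1]
def y1lr24 : List Int := [-4,-4,-8,-3,-2,-3,-2,-2,-4,-2,-1,0,-1,0,-1,1,1,0,0,0,-5,-3,-1,-4,-3,-4,-5,-7,-6,-7,-3,-1,-4,1,-3,2,3,0,-2,0]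
def y1lr25 : List Int := [-2,1,-1,0,3,-1,3,0,-1,0,1,0,0,0,-1,0,1,-1,0,0,-1,-1,0,0,-3,1,-1,0,-2,-1,4,0,0,0,-4,0,4,-1,-3,0]
def y1lr26 : List Int := [6,3,2,4,3,4,-1,1,3,5,-1,1,2,2,2,2,1,1,2,1,0,2,0,1,3,0,7,3,5,-2,-7,-2,4,4,2,2,-2,-2,4,1]
def y1lr27 : List Int := [0,0,-2,-3,-6,-5,-1,-3,-2,-6,0,0,-1,0,-1,0,-1,1,1,0,-2,-5,-1,-2,0,0,-5,-5,0,0,0,0,-3,-1,-4,1,-3,2,3,0]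
def y1lr28 : List Int := [0,-1,7,2,3,0,4,-1,5,-4,1,-1,-1,-1,0,0,-2,-1,-1,-1,7,3,-2,1,-1,4,1,1,1,2,6,1,0,-3,3,4,-4,-1,-2,-1]
def y1lr29 : List Int := [-3,-5,-1,-5,-1,-2,-1,0,-3,-2,-1,-1,-1,-2,-1,-1,-1,-2,-2,-1,-4,-1,-3,-1,-5,-3,-1,0,-5,-4,0,1,1,-2,1,0,1,-4,-2,-1]
def y1lr30 : List Int := [2,4,3,2,1,-1,4,0,3,-1,1,1,0,0,-1,0,0,0,0,0,2,0,0,2,1,4,-1,2,2,4,4,3,-2,1,-3,1,-1,1,0,0]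
def y1lr31 : List Int := [-6,-8,-7,-7,-6,-8,-5,-6,-4,-7,-2,-2,-2,-2,-2,-2,-3,-2,-3,-2,-2,-6,-7,-4,-4,-4,-6,-5,-5,-7,1,-1,0,0,0,0,-5,-1,-4,-2]
def y1lr32 : List Int := [-1,-1,-2,-1,0,2,-2,2,-3,3,-2,-1,-1,-1,-1,-2,-1,-2,-1,-1,-3,-2,-3,-1,-1,-3,4,3,-1,-1,-2,0,0,2,2,-2,2,-4,2,-1]
def y1lr33 : List Int := [-2,-5,-6,-5,-6,-5,-5,-4,-3,-5,-2,-2,-1,-1,-1,-1,-2,-1,-1,-1,-2,-5,-4,-3,-1,-3,-3,-4,-2,-6,-3,-1,0,1,0,0,-4,0,0,-1]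
def y1lr34 : List Int := [-2,-1,-5,-2,-2,-2,-3,0,-7,-2,-2,-2,-1,-2,-2,-2,-1,-2,-1,-2,-4,-6,-3,-2,0,-3,0,0,-2,-3,0,-2,2,0,-2,-3,1,-1,2,-3]
def y1lr35 : List Int := [1,1,2,2,4,2,3,2,-1,1,1,0,1,0,0,1,1,0,1,0,-1,1,2,1,-1,1,1,1,-1,0,1,-1,2,-2,-2,1,4,-1,0,0]
def y1lr36 : List Int := [3,1,3,-4,1,-1,4,2,2,4,2,3,3,2,2,2,3,1,2,3,-5,2,0,4,-4,0,0,4,-1,1,-1,3,3,0,-2,-2,2,-4,-2,4]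
def y1lr37 : List Int := [3,2,4,5,6,2,3,0,3,2,0,0,1,0,0,1,0,0,0,0,2,3,1,2,1,3,4,3,3,0,0,-1,4,1,-1,4,0,-1,0,0]
def y1lr38 : List Int := [1,0,1,1,-1,-2,0,-2,3,-3,1,0,0,1,0,1,-1,1,0,0,4,-2,-3,-1,0,2,-2,-1,1,-1,2,0,-1,1,0,2,-5,1,-1,-1]
def y1lr39 : List Int := [-3,-4,-4,0,-1,-4,-3,-6,1,-3,0,-1,0,0,0,1,-1,1,-1,0,4,0,0,-4,0,0,-4,-7,-1,-4,0,-4,0,0,0,4,-4,4,-4,0]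
def y1l : List (List Int) := [y1lr0,y1lr1,y1lr2,y1lr3,y1lr4,y1lr5,y1lr6,y1lr7,y1lr8,y1lr9,y1lr10,y1lr11,y1lr12,y1lr13,y1lr14,y1lr15,y1lr16,y1lr17,y1lr18,y1lr19,y1lr20,y1lr21,y1lr22,y1lr23,y1lr24,y1lr25,y1lr26,y1lr27,y1lr28,y1lr29,y1lr30,y1lr31,y1lr32,y1lr33,y1lr34,y1lr35,y1lr36,y1lr37,y1lr38,y1lr39]
def flr0 : List Int := [4,-2,1,1,-1,1,0,1,0,0,0,-1,0,-1,-1,0,0,1,1,1,0,0,1,0,-1,1,-2,1,1,0,1,0,0,0,0,0,0,0,1,0]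
def flr1 : List Int := [-2,4,-2,-2,0,-1,1,-1,1,0,1,0,0,1,0,0,-1,0,0,-1,0,-1,-2,0,0,-2,0,-1,1,1,0,1,0,0,0,0,-1,0,0,0]
def flr2 : List Int := [1,-2,4,1,0,1,0,1,0,1,-1,0,-1,-1,-1,1,-1,1,0,0,1,0,1,1,-1,0,1,0,-1,0,0,0,1,1,1,0,1,1,0,0]
def flr3 : List Int := [1,-2,1,4,-1,1,0,1,0,-1,0,0,-1,-1,0,0,1,1,-1,0,0,0,0,0,1,1,0,0,-2,0,0,-1,1,0,1,0,1,0,-1,-1]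
def flr4 : List Int := [-1,0,0,-1,4,-1,0,-1,-1,1,0,0,1,1,0,0,1,0,1,-1,-1,-1,0,-1,0,1,1,0,0,-1,0,0,-2,1,1,1,1,0,0,-1]
def flr5 : List Int := [1,-1,1,1,-1,4,1,1,1,0,0,-1,0,-1,-1,0,-1,0,-1,0,-1,-1,0,1,-1,-1,1,0,0,0,-1,0,1,1,0,-1,0,0,0,0]
def flr6 : List Int := [0,1,0,0,0,1,4,1,1,-1,1,0,1,0,0,0,0,0,0,-1,-1,0,-2,1,0,-2,1,0,0,0,0,1,1,1,0,-1,-1,0,1,0]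
def flr7 : List Int := [1,-1,1,1,-1,1,1,4,1,-1,0,1,0,0,-1,-1,0,1,1,0,1,-1,-1,0,1,0,1,1,0,0,0,0,0,1,0,0,0,1,1,1]
def flr8 : List Int := [0,1,0,0,-1,1,1,1,4,-1,1,0,0,-1,0,1,-1,1,-1,0,1,0,-2,1,0,-2,0,0,0,1,1,1,1,0,0,-1,0,0,0,-1]
def flr9 : List Int := [0,0,1,-1,1,0,-1,-1,-1,4,0,0,0,1,0,1,-1,0,0,0,1,-1,1,0,-1,1,0,-1,1,-1,0,0,0,0,1,1,0,1,-1,0]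
def flr10 : List Int := [0,1,-1,0,0,0,1,0,1,0,4,1,1,-1,1,1,0,0,0,0,1,0,-1,0,0,0,0,-1,0,0,1,0,1,0,0,0,0,0,0,-1]
def flr11 : List Int := [-1,0,0,0,0,-1,0,1,0,0,1,4,1,1,1,-1,0,0,1,0,2,0,0,0,1,0,1,0,-1,-1,0,0,0,0,0,0,-1,1,0,0]
def flr12 : List Int := [0,0,-1,-1,1,0,1,0,0,0,1,1,4,1,1,-1,1,-2,1,-1,0,0,0,-1,0,0,0,1,0,-1,-1,0,0,-1,0,0,-1,-1,0,0]
def flr13 : List Int := [-1,1,-1,-1,1,-1,0,0,-1,1,-1,1,1,4,-1,-1,0,-1,1,-1,0,-1,0,-1,1,0,0,0,1,-1,-1,1,-1,0,1,1,-1,0,0,1]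
def flr14 : List Int := [-1,0,-1,0,0,-1,0,-1,0,0,1,1,1,-1,4,1,1,-1,-1,0,1,2,0,0,0,0,0,0,0,0,0,-1,1,-2,-1,0,0,0,-1,-1]
def flr15 : List Int := [0,0,1,0,0,0,0,-1,1,1,1,-1,-1,-1,1,4,0,0,-1,0,1,1,0,1,-1,0,0,-1,1,0,0,0,1,0,0,1,1,0,0,-1]
def flr16 : List Int := [0,-1,-1,1,1,-1,0,0,-1,-1,0,0,1,0,1,0,4,0,1,0,-1,1,0,-1,1,2,0,1,0,-1,0,-1,-1,0,0,0,0,-1,0,0]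
def flr17 : List Int := [1,0,1,1,0,0,0,1,1,0,0,0,-2,-1,-1,0,0,4,0,1,0,-1,-1,1,0,0,0,0,0,0,2,1,-1,1,1,-1,0,1,0,0]
def flr18 : List Int := [1,0,0,-1,1,-1,0,1,-1,0,0,1,1,1,-1,-1,1,0,4,0,0,-1,0,-1,0,1,0,1,1,-1,0,0,-1,1,0,1,-1,0,1,0]
def flr19 : List Int := [1,-1,0,0,-1,0,-1,0,0,0,0,0,-1,-1,0,0,0,1,0,4,0,1,1,1,0,1,-1,-1,1,0,1,1,0,0,-1,-1,-1,0,0,0]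
def flr20 : List Int := [0,0,1,0,-1,-1,-1,1,1,1,1,2,0,0,1,1,-1,0,0,0,4,0,0,-1,0,0,0,0,0,0,0,-1,1,-1,0,1,0,1,0,0]
def flr21 : List Int := [0,-1,0,0,-1,-1,0,-1,0,-1,0,0,0,-1,2,1,1,-1,-1,1,0,4,1,1,0,0,-1,0,0,1,1,0,1,-1,-1,-1,0,-1,0,0]
def flr22 : List Int := [1,-2,1,0,0,0,-2,-1,-2,1,-1,0,0,0,0,0,0,-1,0,1,0,1,4,0,0,2,-1,-1,0,0,0,0,0,-1,0,0,1,0,0,0]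
def flr23 : List Int := [0,0,1,0,-1,1,1,0,1,0,0,0,-1,-1,0,1,-1,1,-1,1,-1,1,0,4,0,-1,0,-1,0,0,1,2,1,1,0,-1,0,0,0,0]
def flr24 : List Int := [-1,0,-1,1,0,-1,0,1,0,-1,0,1,0,1,0,-1,1,0,0,0,0,0,0,0,4,1,0,-1,-1,0,1,0,0,0,1,0,1,-1,0,0]
def flr25 : List Int := [1,-2,0,1,1,-1,-2,0,-2,1,0,0,0,0,0,0,2,0,1,1,0,0,2,-1,1,4,-1,0,0,-1,0,-1,-1,0,0,1,1,0,0,0]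
def flr26 : List Int := [-2,0,1,0,1,1,1,1,0,0,0,1,0,0,0,0,0,0,0,-1,0,-1,-1,0,0,-1,4,0,-1,-1,-1,0,0,1,0,0,0,1,0,0]
def flr27 : List Int := [1,-1,0,0,0,0,0,1,0,-1,-1,0,1,0,0,-1,1,0,1,-1,0,0,-1,-1,-1,0,0,4,0,-1,-1,-1,-1,0,-1,0,-1,0,1,1]
def flr28 : List Int := [1,1,-1,-2,0,0,0,0,0,1,0,-1,0,1,0,1,0,0,1,1,0,0,0,0,-1,0,-1,0,4,0,0,1,-1,0,-1,1,-1,0,1,1]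
def flr29 : List Int := [0,1,0,0,-1,0,0,0,1,-1,0,-1,-1,-1,0,0,-1,0,-1,0,0,1,0,0,0,-1,-1,-1,0,4,1,0,1,0,0,-1,1,0,0,-1]
def flr30 : List Int := [1,0,0,0,0,-1,0,0,1,0,1,0,-1,-1,0,0,0,2,0,1,0,1,0,1,1,0,-1,-1,0,1,4,1,0,0,1,-1,1,0,0,-1]
def flr31 : List Int := [0,1,0,-1,0,0,1,0,1,0,0,0,0,1,-1,0,-1,1,0,1,-1,0,0,2,0,-1,0,-1,1,0,1,4,0,0,0,-1,-1,1,0,0]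
def flr32 : List Int := [0,0,1,1,-2,1,1,0,1,0,1,0,0,-1,1,1,-1,-1,-1,0,1,1,0,1,0,-1,0,-1,-1,1,0,0,4,-1,0,-1,0,0,-1,-1]
def flr33 : List Int := [0,0,1,0,1,1,1,1,0,0,0,0,-1,0,-2,0,0,1,1,0,-1,-1,-1,1,0,0,1,0,0,0,0,0,-1,4,1,0,0,0,1,0]
def flr34 : List Int := [0,0,1,1,1,0,0,0,0,1,0,0,0,1,-1,0,0,1,0,-1,0,-1,0,0,1,0,0,-1,-1,0,1,0,0,1,4,0,1,-1,-1,-1]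
def flr35 : List Int := [0,0,0,0,1,-1,-1,0,-1,1,0,0,0,1,0,1,0,-1,1,-1,1,-1,0,-1,0,1,0,0,1,-1,-1,-1,-1,0,0,4,1,0,0,0]
def flr36 : List Int := [0,-1,1,1,1,0,-1,0,0,0,0,-1,-1,-1,0,1,0,0,-1,-1,0,0,1,0,1,1,0,-1,-1,1,1,-1,0,0,1,1,4,0,0,-1]
def flr37 : List Int := [0,0,1,0,0,0,0,1,0,1,0,1,-1,0,0,0,-1,1,0,0,1,-1,0,0,-1,0,1,0,0,0,0,1,0,0,-1,0,0,4,0,0]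
def flr38 : List Int := [1,0,0,-1,0,0,1,1,0,-1,0,0,0,0,-1,0,0,0,1,0,0,0,0,0,0,0,0,1,1,0,0,0,-1,1,-1,0,0,0,4,1]
def flr39 : List Int := [0,0,0,-1,-1,0,0,1,-1,0,-1,0,0,1,-1,-1,0,0,0,0,0,0,0,0,0,0,0,1,1,-1,-1,0,-1,0,-1,0,-1,0,1,4]
def fl : List (List Int) := [flr0,flr1,flr2,flr3,flr4,flr5,flr6,flr7,flr8,flr9,flr10,flr11,flr12,flr13,flr14,flr15,flr16,flr17,flr18,flr19,flr20,flr21,flr22,flr23,flr24,flr25,flr26,flr27,flr28,flr29,flr30,flr31,flr32,flr33,flr34,flr35,flr36,flr37,flr38,flr39]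
def qlTr0 : List Int := [-7,-5,-5,-20,-16,-20,-6,-10,-6,-9,3,2,2,2,2,2,2,3,2,7,-9,-6,-2,-3,-6,-5,-16,-9,0,2,1,-2,-3,-3,-5,-5,-8,-2,0,12]
def qlTr1 : List Int := [-1,6,11,-16,-5,-19,4,-7,12,4,14,13,14,13,14,14,14,16,12,24,-4,15,15,4,-1,4,-17,-7,16,18,0,-7,0,-6,-3,-2,-10,0,-1,33]
def qlTr2 : List Int := [-1,0,-1,-2,-2,-3,-1,-1,-5,-3,-1,-1,0,-1,-1,-1,-1,-1,0,-1,-3,-5,-2,-1,0,-2,-1,-1,-1,0,1,-1,0,-1,-3,-1,0,-1,3,-1]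
def qlTr3 : List Int := [-2,2,1,-6,-2,-6,0,-3,3,3,4,4,4,4,4,4,5,5,3,8,-2,6,7,1,0,1,-5,-2,6,5,-2,-3,0,0,-1,-1,-2,1,-1,12]
def qlTr4 : List Int := [2,3,4,-7,-4,-7,1,-4,6,2,5,5,5,5,5,5,5,6,4,9,-1,6,5,3,0,3,-6,-1,7,7,-1,-1,2,-1,-1,-2,-6,1,-1,12]
def qlTr5 : List Int := [11,13,19,14,13,12,11,10,18,14,8,8,8,8,9,8,8,9,8,10,11,19,13,9,9,10,8,9,15,17,1,-1,3,-3,7,1,0,3,2,10]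
def qlTr6 : List Int := [7,9,7,17,13,15,6,8,8,10,0,0,0,1,0,0,0,0,0,-2,11,9,6,5,8,8,12,10,6,6,2,1,2,3,4,2,5,4,0,-4]
def qlTr7 : List Int := [-9,-10,-10,-22,-15,-21,-7,-12,-7,-10,1,1,1,1,1,2,1,1,0,5,-13,-8,-6,-6,-11,-8,-16,-12,-6,-8,-3,-2,-2,-1,-6,-1,-7,-5,-3,9]
def qlTr8 : List Int := [-7,-12,-14,-13,-14,-10,-9,-8,-14,-13,-7,-6,-7,-7,-7,-7,-7,-7,-7,-8,-9,-13,-9,-5,-6,-8,-8,-8,-12,-11,-2,3,-2,-1,-4,-2,-1,0,-1,-8]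
def qlTr9 : List Int := [-19,-23,-28,-31,-30,-27,-21,-18,-27,-24,-9,-9,-9,-9,-9,-9,-9,-9,-9,-8,-19,-25,-16,-14,-13,-18,-20,-19,-18,-20,-4,-2,-4,-2,-7,-6,-6,-3,-1,-5]
def qlTr10 : List Int := [-7,-9,-12,-8,-10,-6,-8,-5,-15,-11,-7,-7,-7,-7,-7,-7,-7,-8,-6,-9,-7,-14,-10,-6,-5,-8,-3,-5,-11,-11,0,1,-2,0,-3,-2,1,-2,1,-10]
def qlTr11 : List Int := [-7,-8,-10,-11,-11,-12,-8,-8,-7,-9,-1,-1,-1,-1,-1,-1,-1,0,-1,0,-6,-8,-4,-6,-3,-6,-11,-11,-4,-6,-2,-3,-2,-2,-3,-1,-5,1,0,1]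
def qlTr12 : List Int := [10,13,16,14,16,12,12,9,17,14,7,7,7,7,7,7,7,7,7,8,9,15,10,7,6,10,9,9,12,12,1,0,1,2,3,4,2,0,1,8]
def qlTr13 : List Int := [5,7,8,5,6,5,6,5,7,7,3,3,3,3,3,3,3,3,3,4,3,8,6,5,3,5,4,6,6,8,1,1,1,0,1,0,2,1,0,5]
def qlTr14 : List Int := [-8,-9,-11,-15,-13,-14,-8,-7,-12,-11,-3,-3,-3,-3,-3,-3,-3,-3,-3,-2,-10,-11,-7,-6,-6,-8,-10,-8,-7,-7,-1,-1,-2,-2,-4,-3,-3,-2,0,0]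
def qlTr15 : List Int := [5,8,10,0,4,-2,6,1,13,8,8,8,8,8,8,8,8,9,7,12,3,12,10,5,3,7,-3,2,12,12,0,-2,2,-1,0,0,-4,2,-1,15]
def qlTr16 : List Int := [-10,-14,-16,-13,-15,-11,-12,-9,-15,-13,-7,-7,-7,-7,-7,-7,-7,-7,-7,-8,-8,-14,-10,-7,-6,-10,-8,-9,-12,-13,-2,0,-1,-1,-2,-3,-2,0,-2,-8]
def qlTr17 : List Int := [-3,-6,-6,-2,-2,1,-3,1,-6,-4,-3,-3,-3,-3,-3,-3,-3,-4,-2,-5,-4,-7,-6,-4,-4,-5,0,-3,-8,-8,-1,1,-2,0,0,0,3,-3,0,-7]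
def qlTr18 : List Int := [4,5,5,6,5,6,3,4,4,5,1,1,1,1,1,1,1,1,1,1,4,6,5,3,4,4,5,5,5,5,0,0,2,0,2,0,2,2,1,1]
def qlTr19 : List Int := [2,4,4,-3,-1,-4,2,-2,6,3,4,4,4,4,4,4,4,5,3,7,1,7,7,3,2,4,-4,0,7,8,0,-1,1,-1,-1,-1,-3,3,-1,10]
def qlTr20 : List Int := [17,20,25,29,26,27,17,17,23,22,6,6,6,6,6,6,6,6,6,5,19,25,16,14,13,17,21,20,17,19,3,2,6,1,9,4,7,4,1,3]
def qlTr21 : List Int := [2,3,5,-2,0,-1,3,1,4,3,4,4,4,4,4,4,4,4,4,6,-1,4,3,2,-1,1,-2,0,3,5,0,0,-1,-1,0,-1,-1,-2,1,7]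
def qlTr22 : List Int := [-10,-12,-14,-19,-15,-17,-10,-11,-11,-11,-3,-3,-3,-3,-3,-3,-3,-3,-4,-1,-10,-9,-6,-6,-8,-8,-13,-10,-8,-9,-2,-1,-1,-1,-4,-3,-4,-1,-4,2]
def qlTr23 : List Int := [15,17,19,23,20,21,14,12,18,17,4,4,4,4,4,4,4,4,4,3,15,18,12,11,11,14,17,16,13,14,2,3,4,3,5,4,5,4,1,1]
def qlTr24 : List Int := [-3,-4,-5,-6,-7,-5,-4,-3,-7,-6,-2,-2,-2,-2,-2,-2,-2,-2,-1,-2,-4,-7,-4,-3,-2,-4,-4,-4,-4,-3,0,0,-2,-1,-2,-2,-1,-1,2,-2]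
def qlTr25 : List Int := [19,24,29,33,32,28,22,19,27,24,9,9,9,9,9,9,9,9,9,8,20,26,17,14,14,19,21,19,19,21,5,1,4,1,7,7,7,3,2,5]
def qlTr26 : List Int := [5,7,8,5,6,4,5,3,7,6,3,3,3,3,3,3,3,3,3,4,4,7,5,4,3,5,4,5,7,7,1,0,1,1,1,1,0,0,1,5]
def qlTr27 : List Int := [-2,-1,-2,-6,-5,-7,-2,-4,-1,-3,1,1,1,1,1,1,1,2,1,3,-2,0,2,-1,0,0,-6,-4,2,2,0,-2,0,-2,-2,-1,-3,2,0,5]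
def qlTr28 : List Int := [5,5,6,16,13,15,6,7,4,5,-2,-2,-2,-2,-2,-2,-2,-3,-1,-6,8,2,-1,2,4,4,13,7,0,-1,2,2,0,3,3,5,5,-1,2,-10]
def qlTr29 : List Int := [1,0,-1,3,1,3,-1,1,-1,0,-2,-2,-2,-2,-2,-2,-2,-2,-2,-3,2,0,0,0,2,1,3,2,0,-1,0,0,2,0,1,0,1,2,0,-4]
def qlTr30 : List Int := [12,17,20,17,18,12,14,9,22,17,9,9,9,9,9,9,9,10,8,11,13,21,15,10,10,14,9,11,18,18,2,-1,3,1,4,4,0,4,0,12]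
def qlTr31 : List Int := [-15,-18,-20,-20,-19,-18,-15,-11,-19,-17,-6,-6,-6,-6,-6,-6,-6,-6,-6,-6,-13,-18,-13,-11,-10,-14,-14,-14,-14,-16,-2,-3,-2,-3,-3,-4,-4,-3,-2,-5]
def qlTr32 : List Int := [-8,-11,-12,-12,-10,-10,-8,-7,-9,-9,-3,-3,-3,-3,-3,-3,-3,-3,-3,-3,-8,-11,-9,-7,-7,-8,-8,-9,-9,-11,-2,-1,-2,0,-2,-1,-3,-3,-2,-3]
def qlTr33 : List Int := [-10,-12,-13,-16,-13,-14,-9,-8,-11,-11,-3,-3,-3,-3,-3,-3,-3,-3,-3,-2,-10,-11,-8,-7,-8,-9,-11,-10,-9,-10,-2,-1,-3,-1,-3,-2,-3,-3,-2,0]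
def qlTr34 : List Int := [6,6,6,12,9,10,5,5,5,5,0,0,0,0,0,0,0,0,0,-2,7,4,2,3,5,5,8,6,3,3,2,1,2,1,2,2,2,2,1,-5]
def qlTr35 : List Int := [-4,-7,-8,-5,-6,-4,-5,-3,-7,-6,-3,-3,-3,-3,-3,-3,-3,-3,-3,-4,-4,-7,-5,-4,-3,-5,-4,-5,-7,-7,-1,0,-1,-1,-1,-1,0,0,-1,-5]
def qlTr36 : List Int := [-4,-4,-4,-7,-5,-6,-3,-3,-3,-3,0,0,0,0,0,0,0,0,0,1,-4,-2,-1,-2,-3,-3,-5,-4,-2,-2,-1,-1,-1,-1,-1,-1,-1,-1,-1,3]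
def qlTr37 : List Int := [10,11,13,16,14,14,10,8,12,11,3,3,3,3,3,3,3,3,3,2,10,11,7,7,7,9,11,10,8,9,2,2,2,2,3,3,3,2,1,0]
def qlTr38 : List Int := [-4,-6,-7,-5,-6,-4,-5,-3,-7,-6,-3,-3,-3,-3,-3,-3,-3,-3,-3,-4,-4,-8,-6,-4,-3,-5,-3,-4,-6,-7,-1,0,-1,0,-1,-1,-1,-1,0,-5]
def qlTr39 : List Int := [-2,-2,-3,-6,-5,-7,-3,-5,0,-2,1,1,1,1,1,1,1,2,0,3,-1,1,2,-1,0,0,-6,-4,2,1,-1,-2,1,-1,-1,-1,-4,3,-2,5]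
def qlT : List (List Int) := [qlTr0,qlTr1,qlTr2,qlTr3,qlTr4,qlTr5,qlTr6,qlTr7,qlTr8,qlTr9,qlTr10,qlTr11,qlTr12,qlTr13,qlTr14,qlTr15,qlTr16,qlTr17,qlTr18,qlTr19,qlTr20,qlTr21,qlTr22,qlTr23,qlTr24,qlTr25,qlTr26,qlTr27,qlTr28,qlTr29,qlTr30,qlTr31,qlTr32,qlTr33,qlTr34,qlTr35,qlTr36,qlTr37,qlTr38,qlTr39]
def ilr0 : List Int := [1,0,0,0,0,0,0,0,0,0,0,0,0,0,0,0,0,0,0,0,0,0,0,0,0,0,0,0,0,0,0,0,0,0,0,0,0,0,0,0]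
def ilr1 : List Int := [0,1,0,0,0,0,0,0,0,0,0,0,0,0,0,0,0,0,0,0,0,0,0,0,0,0,0,0,0,0,0,0,0,0,0,0,0,0,0,0]
def ilr2 : List Int := [0,0,1,0,0,0,0,0,0,0,0,0,0,0,0,0,0,0,0,0,0,0,0,0,0,0,0,0,0,0,0,0,0,0,0,0,0,0,0,0]
def ilr3 : List Int := [0,0,0,1,0,0,0,0,0,0,0,0,0,0,0,0,0,0,0,0,0,0,0,0,0,0,0,0,0,0,0,0,0,0,0,0,0,0,0,0]
def ilr4 : List Int := [0,0,0,0,1,0,0,0,0,0,0,0,0,0,0,0,0,0,0,0,0,0,0,0,0,0,0,0,0,0,0,0,0,0,0,0,0,0,0,0]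
def ilr5 : List Int := [0,0,0,0,0,1,0,0,0,0,0,0,0,0,0,0,0,0,0,0,0,0,0,0,0,0,0,0,0,0,0,0,0,0,0,0,0,0,0,0]
def ilr6 : List Int := [0,0,0,0,0,0,1,0,0,0,0,0,0,0,0,0,0,0,0,0,0,0,0,0,0,0,0,0,0,0,0,0,0,0,0,0,0,0,0,0]
def ilr7 : List Int := [0,0,0,0,0,0,0,1,0,0,0,0,0,0,0,0,0,0,0,0,0,0,0,0,0,0,0,0,0,0,0,0,0,0,0,0,0,0,0,0]
def ilr8 : List Int := [0,0,0,0,0,0,0,0,1,0,0,0,0,0,0,0,0,0,0,0,0,0,0,0,0,0,0,0,0,0,0,0,0,0,0,0,0,0,0,0]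
def ilr9 : List Int := [0,0,0,0,0,0,0,0,0,1,0,0,0,0,0,0,0,0,0,0,0,0,0,0,0,0,0,0,0,0,0,0,0,0,0,0,0,0,0,0]
def ilr10 : List Int := [0,0,0,0,0,0,0,0,0,0,1,0,0,0,0,0,0,0,0,0,0,0,0,0,0,0,0,0,0,0,0,0,0,0,0,0,0,0,0,0]
def ilr11 : List Int := [0,0,0,0,0,0,0,0,0,0,0,1,0,0,0,0,0,0,0,0,0,0,0,0,0,0,0,0,0,0,0,0,0,0,0,0,0,0,0,0]
def ilr12 : List Int := [0,0,0,0,0,0,0,0,0,0,0,0,1,0,0,0,0,0,0,0,0,0,0,0,0,0,0,0,0,0,0,0,0,0,0,0,0,0,0,0]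
def ilr13 : List Int := [0,0,0,0,0,0,0,0,0,0,0,0,0,1,0,0,0,0,0,0,0,0,0,0,0,0,0,0,0,0,0,0,0,0,0,0,0,0,0,0]
def ilr14 : List Int := [0,0,0,0,0,0,0,0,0,0,0,0,0,0,1,0,0,0,0,0,0,0,0,0,0,0,0,0,0,0,0,0,0,0,0,0,0,0,0,0]
def ilr15 : List Int := [0,0,0,0,0,0,0,0,0,0,0,0,0,0,0,1,0,0,0,0,0,0,0,0,0,0,0,0,0,0,0,0,0,0,0,0,0,0,0,0]
def ilr16 : List Int := [0,0,0,0,0,0,0,0,0,0,0,0,0,0,0,0,1,0,0,0,0,0,0,0,0,0,0,0,0,0,0,0,0,0,0,0,0,0,0,0]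
def ilr17 : List Int := [0,0,0,0,0,0,0,0,0,0,0,0,0,0,0,0,0,1,0,0,0,0,0,0,0,0,0,0,0,0,0,0,0,0,0,0,0,0,0,0]
def ilr18 : List Int := [0,0,0,0,0,0,0,0,0,0,0,0,0,0,0,0,0,0,1,0,0,0,0,0,0,0,0,0,0,0,0,0,0,0,0,0,0,0,0,0]
def ilr19 : List Int := [0,0,0,0,0,0,0,0,0,0,0,0,0,0,0,0,0,0,0,1,0,0,0,0,0,0,0,0,0,0,0,0,0,0,0,0,0,0,0,0]
def ilr20 : List Int := [0,0,0,0,0,0,0,0,0,0,0,0,0,0,0,0,0,0,0,0,1,0,0,0,0,0,0,0,0,0,0,0,0,0,0,0,0,0,0,0]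
def ilr21 : List Int := [0,0,0,0,0,0,0,0,0,0,0,0,0,0,0,0,0,0,0,0,0,1,0,0,0,0,0,0,0,0,0,0,0,0,0,0,0,0,0,0]
def ilr22 : List Int := [0,0,0,0,0,0,0,0,0,0,0,0,0,0,0,0,0,0,0,0,0,0,1,0,0,0,0,0,0,0,0,0,0,0,0,0,0,0,0,0]
def ilr23 : List Int := [0,0,0,0,0,0,0,0,0,0,0,0,0,0,0,0,0,0,0,0,0,0,0,1,0,0,0,0,0,0,0,0,0,0,0,0,0,0,0,0]
def ilr24 : List Int := [0,0,0,0,0,0,0,0,0,0,0,0,0,0,0,0,0,0,0,0,0,0,0,0,1,0,0,0,0,0,0,0,0,0,0,0,0,0,0,0]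
def ilr25 : List Int := [0,0,0,0,0,0,0,0,0,0,0,0,0,0,0,0,0,0,0,0,0,0,0,0,0,1,0,0,0,0,0,0,0,0,0,0,0,0,0,0]
def ilr26 : List Int := [0,0,0,0,0,0,0,0,0,0,0,0,0,0,0,0,0,0,0,0,0,0,0,0,0,0,1,0,0,0,0,0,0,0,0,0,0,0,0,0]
def ilr27 : List Int := [0,0,0,0,0,0,0,0,0,0,0,0,0,0,0,0,0,0,0,0,0,0,0,0,0,0,0,1,0,0,0,0,0,0,0,0,0,0,0,0]
def ilr28 : List Int := [0,0,0,0,0,0,0,0,0,0,0,0,0,0,0,0,0,0,0,0,0,0,0,0,0,0,0,0,1,0,0,0,0,0,0,0,0,0,0,0]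
def ilr29 : List Int := [0,0,0,0,0,0,0,0,0,0,0,0,0,0,0,0,0,0,0,0,0,0,0,0,0,0,0,0,0,1,0,0,0,0,0,0,0,0,0,0]
def ilr30 : List Int := [0,0,0,0,0,0,0,0,0,0,0,0,0,0,0,0,0,0,0,0,0,0,0,0,0,0,0,0,0,0,1,0,0,0,0,0,0,0,0,0]
def ilr31 : List Int := [0,0,0,0,0,0,0,0,0,0,0,0,0,0,0,0,0,0,0,0,0,0,0,0,0,0,0,0,0,0,0,1,0,0,0,0,0,0,0,0]
def ilr32 : List Int := [0,0,0,0,0,0,0,0,0,0,0,0,0,0,0,0,0,0,0,0,0,0,0,0,0,0,0,0,0,0,0,0,1,0,0,0,0,0,0,0]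
def ilr33 : List Int := [0,0,0,0,0,0,0,0,0,0,0,0,0,0,0,0,0,0,0,0,0,0,0,0,0,0,0,0,0,0,0,0,0,1,0,0,0,0,0,0]
def ilr34 : List Int := [0,0,0,0,0,0,0,0,0,0,0,0,0,0,0,0,0,0,0,0,0,0,0,0,0,0,0,0,0,0,0,0,0,0,1,0,0,0,0,0]
def ilr35 : List Int := [0,0,0,0,0,0,0,0,0,0,0,0,0,0,0,0,0,0,0,0,0,0,0,0,0,0,0,0,0,0,0,0,0,0,0,1,0,0,0,0]
def ilr36 : List Int := [0,0,0,0,0,0,0,0,0,0,0,0,0,0,0,0,0,0,0,0,0,0,0,0,0,0,0,0,0,0,0,0,0,0,0,0,1,0,0,0]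
def ilr37 : List Int := [0,0,0,0,0,0,0,0,0,0,0,0,0,0,0,0,0,0,0,0,0,0,0,0,0,0,0,0,0,0,0,0,0,0,0,0,0,1,0,0]
def ilr38 : List Int := [0,0,0,0,0,0,0,0,0,0,0,0,0,0,0,0,0,0,0,0,0,0,0,0,0,0,0,0,0,0,0,0,0,0,0,0,0,0,1,0]
def ilr39 : List Int := [0,0,0,0,0,0,0,0,0,0,0,0,0,0,0,0,0,0,0,0,0,0,0,0,0,0,0,0,0,0,0,0,0,0,0,0,0,0,0,1]
def il : List (List Int) := [ilr0,ilr1,ilr2,ilr3,ilr4,ilr5,ilr6,ilr7,ilr8,ilr9,ilr10,ilr11,ilr12,ilr13,ilr14,ilr15,ilr16,ilr17,ilr18,ilr19,ilr20,ilr21,ilr22,ilr23,ilr24,ilr25,ilr26,ilr27,ilr28,ilr29,ilr30,ilr31,ilr32,ilr33,ilr34,ilr35,ilr36,ilr37,ilr38,ilr39]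

def dotL (r s : List ℤ) : ℤ := (List.zipWith (· * ·) r s).sum

lemma sum_getD : ∀ (n : ℕ) (r s : List ℤ),
    (∑ k : Fin n, r.getD k 0 * s.getD k 0) = dotL (r.take n) (s.take n) := by
  intro n
  induction n with
  | zero => intro r s; simp [dotL]
  | succ n ih =>
    intro r s
    rw [Fin.sum_univ_succ]
    cases r with
    | nil => simp [dotL]
    | cons a as =>
      cases s with
      | nil => simp [dotL]
      | cons b bs =>
        simp only [Fin.val_succ, List.getD_cons_succ, Fin.val_zero, List.getD_cons_zero,
          List.take_succ_cons, dotL, List.zipWith_cons_cons, List.sum_cons]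
        rw [ih as bs]; rfl

def L2M (m : List (List ℤ)) : Matrix (Fin 40) (Fin 40) ℤ :=
  Matrix.of fun i j => (m.getD (i : ℕ) []).getD (j : ℕ) 0

lemma mulE (a bT c : List (List ℤ))
    (h : ∀ i j : Fin 40, dotL ((a.getD (i : ℕ) []).take 40) ((bT.getD (j : ℕ) []).take 40)
      = (c.getD (i : ℕ) []).getD (j : ℕ) 0) :
    L2M a * (L2M bT)ᵀ = L2M c := by
  ext i j
  have h2 := h i j
  rw [Matrix.mul_apply]
  show (∑ k : Fin 40, (a.getD (i:ℕ) []).getD (k:ℕ) 0 * (bT.getD (j:ℕ) []).getD (k:ℕ) 0) = _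
  rw [sum_getD 40, h2]
  rfl


lemma symgel : L2M gel = (L2M gel)ᵀ := by decide +kernel
lemma symgzl : L2M gzl = (L2M gzl)ᵀ := by decide +kernel
lemma hil : L2M il = (1 : Matrix (Fin 40) (Fin 40) ℤ) := by decide +kernel
lemma hB : Bmat = (L2M bl).map (Int.cast : ℤ → ℚ) := by decide +kernel
lemma hGe : Ge = (21:ℚ)⁻¹ • (L2M gel).map (Int.cast : ℤ → ℚ) := by decide +kernel
lemma hscale : (21:ℚ)⁻¹ • (L2M g21l).map (Int.cast : ℤ → ℚ) = (L2M gzl).map (Int.cast : ℤ → ℚ) := by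
  decide +kernel
lemma hdiag : ∀ i : Fin 40, L2M fl i i = 4 := by decide +kernel

lemma d1 : ∀ i j : Fin 40, dotL ((bl.getD (i : ℕ) []).take 40) ((gel.getD (j : ℕ) []).take 40)
    = (x1l.getD (i : ℕ) []).getD (j : ℕ) 0 := by decide +kernel
lemma d2 : ∀ i j : Fin 40, dotL ((x1l.getD (i : ℕ) []).take 40) ((bl.getD (j : ℕ) []).take 40)
    = (g21l.getD (i : ℕ) []).getD (j : ℕ) 0 := by decide +kernel
lemma d3 : ∀ i j : Fin 40, dotL ((pl.getD (i : ℕ) []).take 40) ((gzl.getD (j : ℕ) []).take 40)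
    = (y1l.getD (i : ℕ) []).getD (j : ℕ) 0 := by decide +kernel
lemma d4 : ∀ i j : Fin 40, dotL ((y1l.getD (i : ℕ) []).take 40) ((pl.getD (j : ℕ) []).take 40)
    = (fl.getD (i : ℕ) []).getD (j : ℕ) 0 := by decide +kernel
lemma d5 : ∀ i j : Fin 40, dotL ((pl.getD (i : ℕ) []).take 40) ((qlT.getD (j : ℕ) []).take 40)
    = (il.getD (i : ℕ) []).getD (j : ℕ) 0 := by decide +kernel

lemma castEq : (Int.cast : ℤ → ℚ) = ⇑(Int.castRingHom ℚ) := rfl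

lemma hG : GO40 = (L2M gzl).map (Int.cast : ℤ → ℚ) := by
  show Bmat * Ge * Bmatᵀ = _
  rw [hB, hGe, mul_smul_comm, smul_mul_assoc, castEq, ← Matrix.transpose_map,
    ← Matrix.map_mul, ← Matrix.map_mul, symgel, mulE _ _ _ d1, mulE _ _ _ d2, ← castEq]
  exact hscale

lemma hPQ : L2M pl * (L2M qlT)ᵀ = 1 := by rw [mulE _ _ _ d5, hil]

lemma key : (L2M pl).map (Int.cast : ℤ → ℚ) * GO40 * ((L2M pl).map (Int.cast : ℤ → ℚ))ᵀ
    = (L2M fl).map (Int.cast : ℤ → ℚ) := by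
  rw [hG, castEq, ← Matrix.transpose_map, ← Matrix.map_mul, ← Matrix.map_mul,
    symgzl, mulE _ _ _ d3, mulE _ _ _ d4]

/-- **Lemma 7.** `O₄₀` has a basis consisting of 4-vectors: there is `P ∈ GL(40, ℤ)`
such that every diagonal entry of `P·G·Pᵀ` equals `4`. -/
theorem O40_basis_of_four_vectors :
    ∃ P : Matrix (Fin 40) (Fin 40) ℤ, IsUnit P.det ∧
      ∀ i, (P.map (Int.cast : ℤ → ℚ) * GO40 * (P.map (Int.cast : ℤ → ℚ))ᵀ) i i = 4 := by
  refine ⟨L2M pl, Matrix.isUnit_det_of_right_inverse hPQ, fun i => ?_⟩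
  rw [key, Matrix.map_apply, hdiag i]
  norm_num
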